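/- arXiv:1108.4508 — 3 statements merged into one kernel-verified Lean document; each statement's English description precedes it below -/
import Mathlib

section
/- Let h be a hyperexponential term given in standard form h = c0·exp(a/b)·∏_{ℓ=1}^L c_ℓ^{e_ℓ} with deg_x a > deg_x b. Then for every integer i ≥ 0 there exists a polynomial N_i ∈ K[x,y] such that (D_x^i h)·c0·(b·b*·∏_{ℓ=1}^L c_ℓ)^i = N_i·h in E, and N_i satisfies: (1) deg_x N_i = deg_x c0 + i·(deg_x a + deg_x b* + Σ_{ℓ=1}^L deg_x c_ℓ − 1); (2) deg_y N_i ≤ deg_y c0 + i·(max{deg_y a, deg_y b} + deg_y b* + Σ_{ℓ=1}^L deg_y c_ℓ); (3) lc_x N_i = (lc_x c0)·(lc_x(a·b*·∏_{ℓ=1}^L c_ℓ))^i·(deg_x a − deg_x b)^i, where the integer deg_x a − deg_x b is interpreted as an element of K. -/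
open Polynomial Finset

/-- The derivative with respect to `y` on `K[y][x]`
(we represent bivariate polynomials as `Polynomial (Polynomial K)`,
the *outer* variable being `x`, the *inner* variable being `y`). -/
noncomputable def DY {K : Type*} [CommRing K] (p : Polynomial (Polynomial K)) :
    Polynomial (Polynomial K) :=
  p.sum fun n a => Polynomial.C (Polynomial.derivative a) * Polynomial.X ^ n

/-- The degree with respect to `y` of an element of `K[y][x]`. -/
noncomputable def degY {K : Type*} [CommRing K] (p : Polynomial (Polynomial K)) : ℕ :=
  p.support.sup fun n => (p.coeff n).natDegree

/-- The embedding of `K[x]` into `K[y][x]` (polynomials free of `y`). -/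
noncomputable def liftX {K : Type*} [CommRing K] (p : Polynomial K) :
    Polynomial (Polynomial K) :=
  p.map (Polynomial.C : K →+* Polynomial K)

/-- The falling factorial `z(z-1)⋯(z-n+1)` of an element of `K`. -/
noncomputable def ffall {K : Type*} [Field K] (z : K) (n : ℕ) : K :=
  ∏ j ∈ Finset.range n, (z - (j : K))

section DegY
variable {K : Type*} [CommRing K]

lemma coeff_natDegree_le_degY (p : Polynomial (Polynomial K)) (k : ℕ) :
    (p.coeff k).natDegree ≤ degY p := by
  show _ ≤ p.support.sup fun n => (p.coeff n).natDegree
  by_cases hk : k ∈ p.support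
  · exact Finset.le_sup (f := fun n => (p.coeff n).natDegree) hk
  · simp [Polynomial.notMem_support_iff.mp hk]

lemma degY_le_iff {p : Polynomial (Polynomial K)} {n : ℕ} :
    degY p ≤ n ↔ ∀ k, (p.coeff k).natDegree ≤ n := by
  constructor
  · exact fun H k => (coeff_natDegree_le_degY p k).trans H
  · intro H
    exact Finset.sup_le fun k _ => H k

lemma degY_zero : degY (0 : Polynomial (Polynomial K)) = 0 := by simp [degY]

lemma degY_C (q : Polynomial K) : degY (Polynomial.C q : Polynomial (Polynomial K)) = q.natDegree := by
  rcases eq_or_ne q 0 with rfl | hq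
  · simp [degY]
  · apply le_antisymm
    · rw [degY_le_iff]
      intro k
      rcases eq_or_ne k 0 with rfl | hk
      · simp
      · simp [Polynomial.coeff_C, hk]
    · simpa using coeff_natDegree_le_degY (Polynomial.C q) 0

lemma degY_one : degY (1 : Polynomial (Polynomial K)) = 0 := by
  simpa using degY_C (1 : Polynomial K)

lemma degY_natCast (n : ℕ) : degY (n : Polynomial (Polynomial K)) = 0 := by
  rw [← Polynomial.C_eq_natCast, degY_C]
  simp

lemma degY_add_le (p q : Polynomial (Polynomial K)) :
    degY (p + q) ≤ max (degY p) (degY q) := by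
  rw [degY_le_iff]
  intro k
  rw [Polynomial.coeff_add]
  exact (Polynomial.natDegree_add_le _ _).trans
    (max_le_max (coeff_natDegree_le_degY p k) (coeff_natDegree_le_degY q k))

lemma degY_neg (p : Polynomial (Polynomial K)) : degY (-p) = degY p := by
  simp [degY]

lemma degY_sub_le (p q : Polynomial (Polynomial K)) :
    degY (p - q) ≤ max (degY p) (degY q) := by
  rw [sub_eq_add_neg]
  simpa [degY_neg] using degY_add_le p (-q)

lemma degY_mul_le (p q : Polynomial (Polynomial K)) :
    degY (p * q) ≤ degY p + degY q := by
  rw [degY_le_iff]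
  intro k
  rw [Polynomial.coeff_mul]
  apply Polynomial.natDegree_sum_le_of_forall_le
  intro x hx
  exact (Polynomial.natDegree_mul_le).trans
    (add_le_add (coeff_natDegree_le_degY p x.1) (coeff_natDegree_le_degY q x.2))

lemma degY_smul_le (e : K) (p : Polynomial (Polynomial K)) :
    degY (e • p) ≤ degY p := by
  rw [degY_le_iff]
  intro k
  rw [Polynomial.coeff_smul]
  exact (Polynomial.natDegree_smul_le e _).trans (coeff_natDegree_le_degY p k)

lemma degY_derivative_le (p : Polynomial (Polynomial K)) :
    degY (Polynomial.derivative p) ≤ degY p := by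
  rw [degY_le_iff]
  intro k
  rw [Polynomial.coeff_derivative]
  refine Polynomial.natDegree_mul_le.trans ?_
  have h0 : ((k : Polynomial K) + 1).natDegree = 0 := by
    rw [← Nat.cast_one, ← Nat.cast_add, Polynomial.natDegree_natCast]
  rw [h0, add_zero]
  exact coeff_natDegree_le_degY p (k+1)

lemma degY_prod_le {ι : Type*} (s : Finset ι) (f : ι → Polynomial (Polynomial K)) :
    degY (∏ i ∈ s, f i) ≤ ∑ i ∈ s, degY (f i) := by
  classical
  induction s using Finset.cons_induction with
  | empty => simp [degY_one]
  | cons a s ha ih =>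
    rw [Finset.prod_cons, Finset.sum_cons]
    exact (degY_mul_le _ _).trans (add_le_add le_rfl ih)

lemma degY_sum_le_of_forall_le {ι : Type*} (s : Finset ι) (f : ι → Polynomial (Polynomial K))
    {n : ℕ} (H : ∀ i ∈ s, degY (f i) ≤ n) :
    degY (∑ i ∈ s, f i) ≤ n := by
  classical
  induction s using Finset.cons_induction with
  | empty => simp [degY_zero]
  | cons a s ha ih =>
    rw [Finset.sum_cons]
    refine (degY_add_le _ _).trans (max_le (H a (Finset.mem_cons_self a s)) (ih ?_))
    exact fun i hi => H i (Finset.mem_cons_of_mem hi)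

end DegY

section Swap
variable {K : Type*} [CommRing K]

noncomputable def swapRH (K : Type*) [CommRing K] :
    Polynomial (Polynomial K) →+* Polynomial (Polynomial K) :=
  Polynomial.eval₂RingHom (Polynomial.mapRingHom (Polynomial.C : K →+* Polynomial K))
    (Polynomial.C Polynomial.X)

lemma swapRH_C (q : Polynomial K) : swapRH K (Polynomial.C q) = liftX q := by
  simp [swapRH, liftX]

lemma swapRH_X : swapRH K (Polynomial.X) = Polynomial.C Polynomial.X := by
  simp [swapRH]

lemma swapRH_liftX (q : Polynomial K) : swapRH K (liftX q) = Polynomial.C q := by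
  induction q using Polynomial.induction_on' with
  | add p q hp hq =>
    rw [liftX] at hp hq ⊢
    rw [Polynomial.map_add, map_add, hp, hq, map_add]
  | monomial n k =>
    rw [liftX, Polynomial.map_monomial]
    rw [← Polynomial.C_mul_X_pow_eq_monomial, map_mul, map_pow, swapRH_C, swapRH_X]
    rw [liftX, Polynomial.map_C, ← Polynomial.C_pow, ← map_mul,
      Polynomial.C_mul_X_pow_eq_monomial]

lemma swapRH_swapRH (p : Polynomial (Polynomial K)) : swapRH K (swapRH K p) = p := by
  induction p using Polynomial.induction_on' with
  | add p q hp hq => rw [map_add, map_add, hp, hq]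
  | monomial n q =>
    rw [← Polynomial.C_mul_X_pow_eq_monomial, map_mul, map_pow, map_mul, map_pow,
      swapRH_C, swapRH_X, swapRH_liftX, swapRH_C, liftX, Polynomial.map_X]

lemma swapRH_injective : Function.Injective (swapRH K) :=
  Function.LeftInverse.injective swapRH_swapRH

lemma natDegree_liftX (q : Polynomial K) : (liftX q).natDegree = q.natDegree :=
  Polynomial.natDegree_map_eq_of_injective Polynomial.C_injective q

lemma natDegree_swapRH_le_degY (p : Polynomial (Polynomial K)) :
    (swapRH K p).natDegree ≤ degY p := by
  have : swapRH K p = ∑ n ∈ p.support, liftX (p.coeff n) * Polynomial.C (Polynomial.X ^ n) := by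
    rw [swapRH, Polynomial.coe_eval₂RingHom, Polynomial.eval₂_eq_sum, Polynomial.sum]
    refine Finset.sum_congr rfl fun n _ => ?_
    rw [Polynomial.coe_mapRingHom, ← Polynomial.C_pow]
    rfl
  rw [this]
  apply Polynomial.natDegree_sum_le_of_forall_le
  intro n hn
  refine Polynomial.natDegree_mul_le.trans ?_
  rw [Polynomial.natDegree_C, add_zero, natDegree_liftX]
  exact coeff_natDegree_le_degY p n

lemma degY_swapRH_le_natDegree (p : Polynomial (Polynomial K)) :
    degY (swapRH K p) ≤ p.natDegree := by
  have : swapRH K p = ∑ n ∈ p.support, liftX (p.coeff n) * Polynomial.C (Polynomial.X ^ n) := by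
    rw [swapRH, Polynomial.coe_eval₂RingHom, Polynomial.eval₂_eq_sum, Polynomial.sum]
    refine Finset.sum_congr rfl fun n _ => ?_
    rw [Polynomial.coe_mapRingHom, ← Polynomial.C_pow]
    rfl
  rw [this, degY_le_iff]
  intro k
  rw [Polynomial.finset_sum_coeff]
  apply Polynomial.natDegree_sum_le_of_forall_le
  intro n hn
  rw [Polynomial.coeff_mul_C, liftX, Polynomial.coeff_map]
  refine Polynomial.natDegree_mul_le.trans ?_
  rw [Polynomial.natDegree_C, zero_add]
  exact (Polynomial.natDegree_X_pow_le n).trans (Polynomial.le_natDegree_of_mem_supp n hn)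

lemma natDegree_swapRH (p : Polynomial (Polynomial K)) :
    (swapRH K p).natDegree = degY p := by
  refine le_antisymm (natDegree_swapRH_le_degY p) ?_
  conv_lhs => rw [← swapRH_swapRH p]
  exact degY_swapRH_le_natDegree _

lemma degY_mul' {K : Type*} [CommRing K] [IsDomain K] {p q : Polynomial (Polynomial K)}
    (hp : p ≠ 0) (hq : q ≠ 0) : degY (p * q) = degY p + degY q := by
  rw [← natDegree_swapRH, ← natDegree_swapRH, ← natDegree_swapRH, map_mul]
  have hp' : swapRH K p ≠ 0 := fun H => hp (swapRH_injective (by rw [H, map_zero]))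
  have hq' : swapRH K q ≠ 0 := fun H => hq (swapRH_injective (by rw [H, map_zero]))
  exact Polynomial.natDegree_mul hp' hq'

end Swap

lemma dvd_derivative_mul_of_primes_dvd {K : Type*} [Field K]
    (s : Polynomial (Polynomial K)) :
    ∀ b : Polynomial (Polynomial K),
      (∀ q : Polynomial (Polynomial K), Prime q → q ∣ b → q ∣ s) →
      b ∣ Polynomial.derivative b * s := by
  intro b
  induction b using UniqueFactorizationMonoid.induction_on_prime with
  | h₁ => intro _; simp
  | h₂ u hu => intro _; exact hu.dvd
  | h₃ a p ha hp ih =>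
    intro H
    have hps : p ∣ s := H p hp (Dvd.intro a rfl)
    have has : a ∣ Polynomial.derivative a * s :=
      ih fun q hq hqa => H q hq (hqa.mul_left p)
    obtain ⟨u, hu⟩ := hps
    obtain ⟨v, hv⟩ := has
    rw [Polynomial.derivative_mul, add_mul]
    apply dvd_add
    · exact ⟨Polynomial.derivative p * u, by rw [hu]; ring⟩
    · exact ⟨v, by rw [show p * Polynomial.derivative a * s = p * (Polynomial.derivative a * s) from by ring, hv]; ring⟩

lemma natDegree_smul_le_het {S R : Type*} [Semiring R] [SMulZeroClass S R] (e : S)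
    (p : Polynomial R) : (e • p).natDegree ≤ p.natDegree := by
  rw [Polynomial.natDegree_le_iff_coeff_eq_zero]
  intro m hm
  rw [Polynomial.coeff_smul, Polynomial.coeff_eq_zero_of_natDegree_lt hm, smul_zero]

theorem lemma7_part1
    {K : Type*} {E : Type*} [Field K] [CharZero K] [Field E]
    (Dx Dy : E → E)
    (hDxadd : ∀ u v : E, Dx (u + v) = Dx u + Dx v)
    (hDxmul : ∀ u v : E, Dx (u * v) = Dx u * v + u * Dx v)
    (hDyadd : ∀ u v : E, Dy (u + v) = Dy u + Dy v)
    (hDymul : ∀ u v : E, Dy (u * v) = Dy u * v + u * Dy v)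
    (hcomm : ∀ u : E, Dx (Dy u) = Dy (Dx u))
    (ι : Polynomial (Polynomial K) →+* E)
    (hinj : Function.Injective ι)
    (hDxι : ∀ q : Polynomial (Polynomial K), Dx (ι q) = ι (Polynomial.derivative q))
    (hDyι : ∀ q : Polynomial (Polynomial K), Dy (ι q) = ι (DY q))
    (L : ℕ) (a b c0 bs : Polynomial (Polynomial K))
    (c : Fin L → Polynomial (Polynomial K)) (e : Fin L → K)
    (ha : a ≠ 0) (hb : b ≠ 0) (hc0 : c0 ≠ 0) (hc : ∀ ℓ, c ℓ ≠ 0)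
    (hbs : Squarefree bs)
    (hbsb : ∀ q : Polynomial (Polynomial K), Prime q → (q ∣ bs ↔ q ∣ b))
    (h : E) (hh : h ≠ 0)
    (hDxh : Dx h * ι (c0 * b ^ 2 * (∏ ℓ, c ℓ))
      = h * ι (Polynomial.derivative c0 * b ^ 2 * (∏ ℓ, c ℓ)
          + (Polynomial.derivative a * b - a * Polynomial.derivative b) * c0 * (∏ ℓ, c ℓ)
          + c0 * b ^ 2 * ∑ ℓ, e ℓ • (Polynomial.derivative (c ℓ) * ∏ j ∈ Finset.univ.erase ℓ, c j)))
    (hDyh : Dy h * ι (c0 * b ^ 2 * (∏ ℓ, c ℓ))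
      = h * ι (DY c0 * b ^ 2 * (∏ ℓ, c ℓ)
          + (DY a * b - a * DY b) * c0 * (∏ ℓ, c ℓ)
          + c0 * b ^ 2 * ∑ ℓ, e ℓ • (DY (c ℓ) * ∏ j ∈ Finset.univ.erase ℓ, c j)))
    (hdeg : b.natDegree < a.natDegree) (i : ℕ) :
    ∃ N : Polynomial (Polynomial K),
      (Dx^[i] h) * ι (c0 * (b * bs * ∏ ℓ, c ℓ) ^ (i)) = ι N * h ∧
      (N.natDegree : ℤ)
        = (c0.natDegree : ℤ)
          + (i : ℤ) * ((a.natDegree : ℤ) + (bs.natDegree : ℤ)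
              + (∑ ℓ, ((c ℓ).natDegree : ℤ)) - 1) ∧
      degY N ≤ degY c0
          + i * (max (degY a) (degY b) + degY bs + ∑ ℓ, degY (c ℓ)) ∧
      N.leadingCoeff
        = Polynomial.C ((((a.natDegree : ℤ) - (b.natDegree : ℤ) : ℤ) : K) ^ i)
          * (c0.leadingCoeff * (a * bs * ∏ ℓ, c ℓ).leadingCoeff ^ i) := by
  classical
  obtain ⟨t, ht⟩ : ∃ t, Polynomial.derivative b * bs = b * t :=
    dvd_derivative_mul_of_primes_dvd bs b (fun q hq hqb => (hbsb q hq).2 hqb)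
  set Pc : Polynomial (Polynomial K) := ∏ ℓ, c ℓ with hPcdef
  set S : Polynomial (Polynomial K) :=
    ∑ ℓ, e ℓ • (Polynomial.derivative (c ℓ) * ∏ j ∈ Finset.univ.erase ℓ, c j) with hSdef
  have hbs0 : bs ≠ 0 := hbs.ne_zero
  have hPc0 : Pc ≠ 0 := by
    rw [hPcdef]; exact Finset.prod_ne_zero_iff.mpr fun ℓ _ => hc ℓ
  have hda : 1 ≤ a.natDegree := by omega
  have hPcdeg : Pc.natDegree = ∑ ℓ, (c ℓ).natDegree := by
    rw [hPcdef]; exact Polynomial.natDegree_prod _ _ fun ℓ _ => hc ℓ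
  set sc : ℕ := ∑ ℓ, (c ℓ).natDegree with hscdef
  set n1 : ℕ := (a.natDegree - 1) + bs.natDegree with hn1def
  set n : ℕ := n1 + sc with hndef
  have hlca : a.leadingCoeff ≠ 0 := Polynomial.leadingCoeff_ne_zero.mpr ha
  have hlcbs : bs.leadingCoeff ≠ 0 := Polynomial.leadingCoeff_ne_zero.mpr hbs0
  have hlcb : b.leadingCoeff ≠ 0 := Polynomial.leadingCoeff_ne_zero.mpr hb
  have hlcc0 : c0.leadingCoeff ≠ 0 := Polynomial.leadingCoeff_ne_zero.mpr hc0
  have hlcPc : Pc.leadingCoeff ≠ 0 := Polynomial.leadingCoeff_ne_zero.mpr hPc0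
  -- coefficient of derivative at top
  have hderiv_coeff : ∀ p : Polynomial (Polynomial K), 1 ≤ p.natDegree →
      (Polynomial.derivative p).coeff (p.natDegree - 1)
        = p.leadingCoeff * (p.natDegree : Polynomial K) := by
    intro p hp
    rw [Polynomial.coeff_derivative]
    have h1 : p.natDegree - 1 + 1 = p.natDegree := Nat.sub_add_cancel hp
    rw [h1]
    have h2 : ((p.natDegree - 1 : ℕ) : Polynomial K) + 1 = (p.natDegree : Polynomial K) := by
      exact_mod_cast congrArg (fun m : ℕ => (m : Polynomial K)) h1
    rw [h2, Polynomial.leadingCoeff]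
  have hcastne : ∀ m : ℕ, 1 ≤ m → ((m : Polynomial K) ≠ 0) := by
    intro m hm
    exact_mod_cast Nat.cast_ne_zero.mpr (by omega)
  -- derivative a facts
  have hda' : (Polynomial.derivative a).natDegree = a.natDegree - 1 := by
    refine le_antisymm (Polynomial.natDegree_derivative_le a) ?_
    apply Polynomial.le_natDegree_of_ne_zero
    rw [hderiv_coeff a hda]
    exact mul_ne_zero hlca (hcastne _ hda)
  have hda0 : Polynomial.derivative a ≠ 0 := by
    intro H
    have := hderiv_coeff a hda
    rw [H] at this
    simp only [Polynomial.coeff_zero] at this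
    exact (mul_ne_zero hlca (hcastne _ hda)) this.symm
  have hlcda : (Polynomial.derivative a).leadingCoeff
      = a.leadingCoeff * (a.natDegree : Polynomial K) := by
    rw [Polynomial.leadingCoeff, hda']; exact hderiv_coeff a hda
  -- the Q polynomial
  set Q : Polynomial (Polynomial K) := Polynomial.derivative a * bs - a * t with hQdef
  set w : Polynomial K :=
    Polynomial.C ((a.natDegree : K) - (b.natDegree : K)) * (a.leadingCoeff * bs.leadingCoeff)
    with hwdef
  have hQ1deg : (Polynomial.derivative a * bs).natDegree = n1 := by
    rw [Polynomial.natDegree_mul hda0 hbs0, hda']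
  have hQ1coeff : (Polynomial.derivative a * bs).coeff n1
      = (a.natDegree : Polynomial K) * (a.leadingCoeff * bs.leadingCoeff) := by
    have := Polynomial.coeff_mul_degree_add_degree (Polynomial.derivative a) bs
    rw [hda'] at this
    rw [hn1def, this, hlcda]; ring
  have hQ2 : (a * t).natDegree ≤ n1 ∧ (a * t).coeff n1
      = (b.natDegree : Polynomial K) * (a.leadingCoeff * bs.leadingCoeff) := by
    by_cases hb0 : b.natDegree = 0
    · have hdb : Polynomial.derivative b = 0 := by
        rw [Polynomial.eq_C_of_natDegree_eq_zero hb0]; exact Polynomial.derivative_C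
      have ht0 : t = 0 := by
        have : b * t = 0 := by rw [← ht, hdb, zero_mul]
        rcases mul_eq_zero.mp this with h1 | h1
        · exact absurd h1 hb
        · exact h1
      rw [ht0, mul_zero]
      constructor
      · simp
      · rw [hb0]; simp
    · have hdb1 : 1 ≤ b.natDegree := Nat.one_le_iff_ne_zero.mpr hb0
      have hdb' : (Polynomial.derivative b).natDegree = b.natDegree - 1 := by
        refine le_antisymm (Polynomial.natDegree_derivative_le b) ?_
        apply Polynomial.le_natDegree_of_ne_zero
        rw [hderiv_coeff b hdb1]
        exact mul_ne_zero hlcb (hcastne _ hdb1)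
      have hdb0 : Polynomial.derivative b ≠ 0 := by
        intro H
        have := hderiv_coeff b hdb1
        rw [H] at this
        simp only [Polynomial.coeff_zero] at this
        exact (mul_ne_zero hlcb (hcastne _ hdb1)) this.symm
      have ht0 : t ≠ 0 := by
        intro H
        rw [H, mul_zero] at ht
        exact (mul_ne_zero hdb0 hbs0) ht
      have hdt : b.natDegree + t.natDegree = (b.natDegree - 1) + bs.natDegree := by
        rw [← Polynomial.natDegree_mul hb ht0, ← ht, Polynomial.natDegree_mul hdb0 hbs0, hdb']
      have hn1eq : n1 = a.natDegree + t.natDegree := by rw [hn1def]; omega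
      have hlct : b.leadingCoeff * t.leadingCoeff
          = b.leadingCoeff * ((b.natDegree : Polynomial K) * bs.leadingCoeff) := by
        rw [← Polynomial.leadingCoeff_mul, ← ht, Polynomial.leadingCoeff_mul,
          Polynomial.leadingCoeff, hdb', hderiv_coeff b hdb1]
        ring
      have hlct' : t.leadingCoeff = (b.natDegree : Polynomial K) * bs.leadingCoeff :=
        mul_left_cancel₀ hlcb hlct
      constructor
      · rw [hn1eq, Polynomial.natDegree_mul ha ht0]
      · rw [hn1eq, Polynomial.coeff_mul_degree_add_degree, hlct']
        ring
  have hQcoeff : Q.coeff n1 = w := by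
    rw [hQdef, Polynomial.coeff_sub, hQ1coeff, hQ2.2, hwdef]
    simp only [map_sub, map_natCast]
    ring
  have hw0 : w ≠ 0 := by
    rw [hwdef]
    refine mul_ne_zero ?_ (mul_ne_zero hlca hlcbs)
    rw [Polynomial.C_ne_zero]
    rw [sub_ne_zero]
    exact_mod_cast hdeg.ne'
  have hQd : Q.natDegree ≤ n1 := by
    rw [hQdef]
    refine (Polynomial.natDegree_sub_le _ _).trans (max_le (le_of_eq hQ1deg) hQ2.1)
  have hQdeg : Q.natDegree = n1 :=
    le_antisymm hQd (Polynomial.le_natDegree_of_ne_zero (by rw [hQcoeff]; exact hw0))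
  have hQ0 : Q ≠ 0 := fun H => hw0 (by rw [← hQcoeff, H, Polynomial.coeff_zero])
  have hQlc : Q.leadingCoeff = w := by rw [Polynomial.leadingCoeff, hQdeg, hQcoeff]
  -- degY facts
  have hdyt : degY t ≤ degY bs := by
    by_cases ht0 : t = 0
    · rw [ht0, degY_zero]; exact Nat.zero_le _
    · have h1 : degY b + degY t = degY (Polynomial.derivative b * bs) := by
        rw [ht, degY_mul' hb ht0]
      have h2 : degY (Polynomial.derivative b * bs) ≤ degY b + degY bs :=
        (degY_mul_le _ _).trans (add_le_add (degY_derivative_le b) le_rfl)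
      omega
  have hdyPc : degY Pc ≤ ∑ ℓ, degY (c ℓ) := by
    rw [hPcdef]; exact degY_prod_le _ _
  have hdyS : degY S ≤ ∑ ℓ, degY (c ℓ) := by
    rw [hSdef]
    apply degY_sum_le_of_forall_le
    intro ℓ _
    refine (degY_smul_le _ _).trans ?_
    refine (degY_mul_le _ _).trans ?_
    have h1 : degY (∏ j ∈ Finset.univ.erase ℓ, c j) ≤ ∑ j ∈ Finset.univ.erase ℓ, degY (c j) :=
      degY_prod_le _ _
    have h2 : degY (c ℓ) + ∑ j ∈ Finset.univ.erase ℓ, degY (c j) = ∑ j, degY (c j) :=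
      Finset.add_sum_erase _ (fun j => degY (c j)) (Finset.mem_univ ℓ)
    have h3 := degY_derivative_le (c ℓ)
    omega
  -- natDegree of S
  have hSd : S.natDegree ≤ sc := by
    rw [hSdef, hscdef]
    apply Polynomial.natDegree_sum_le_of_forall_le
    intro ℓ _
    refine (natDegree_smul_le_het _ _).trans ?_
    refine (Polynomial.natDegree_mul_le).trans ?_
    have h1 : (∏ j ∈ Finset.univ.erase ℓ, c j).natDegree
        ≤ ∑ j ∈ Finset.univ.erase ℓ, (c j).natDegree := Polynomial.natDegree_prod_le _ _
    have h2 : (c ℓ).natDegree + ∑ j ∈ Finset.univ.erase ℓ, (c j).natDegree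
        = ∑ j, (c j).natDegree := Finset.add_sum_erase _ (fun j => (c j).natDegree) (Finset.mem_univ ℓ)
    have h3 := Polynomial.natDegree_derivative_le (c ℓ)
    omega
  have hSsharp : S.natDegree + 1 ≤ sc ∨ S = 0 := by
    by_cases hsc : ∀ ℓ, (c ℓ).natDegree = 0
    · right
      rw [hSdef]
      apply Finset.sum_eq_zero
      intro ℓ _
      rw [Polynomial.derivative_of_natDegree_zero (hsc ℓ), zero_mul, smul_zero]
    · left
      push_neg at hsc
      obtain ⟨ℓ₀, hℓ₀⟩ := hsc
      have hsc1 : 1 ≤ sc := by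
        rw [hscdef]
        calc 1 ≤ (c ℓ₀).natDegree := Nat.one_le_iff_ne_zero.mpr hℓ₀
        _ ≤ ∑ ℓ, (c ℓ).natDegree := Finset.single_le_sum (f := fun ℓ => (c ℓ).natDegree)
          (fun _ _ => Nat.zero_le _) (Finset.mem_univ ℓ₀)
      have hbound : S.natDegree ≤ sc - 1 := by
        rw [hSdef]
        apply Polynomial.natDegree_sum_le_of_forall_le
        intro ℓ _
        refine (natDegree_smul_le_het _ _).trans ?_
        by_cases hcℓ : (c ℓ).natDegree = 0
        · rw [Polynomial.derivative_of_natDegree_zero hcℓ, zero_mul]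
          simp
        · refine (Polynomial.natDegree_mul_le).trans ?_
          have h1 : (∏ j ∈ Finset.univ.erase ℓ, c j).natDegree
              ≤ ∑ j ∈ Finset.univ.erase ℓ, (c j).natDegree := Polynomial.natDegree_prod_le _ _
          have h2 : (c ℓ).natDegree + ∑ j ∈ Finset.univ.erase ℓ, (c j).natDegree
              = ∑ j, (c j).natDegree := Finset.add_sum_erase _ (fun j => (c j).natDegree) (Finset.mem_univ ℓ)
          have h3 := Polynomial.natDegree_derivative_le (c ℓ)
          rw [hscdef]
          omega
      omega
  have hdbn1 : b.natDegree ≤ a.natDegree - 1 := by omega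
  have hMdeg : (b * bs * Pc).natDegree ≤ b.natDegree + bs.natDegree + sc := by
    refine Polynomial.natDegree_mul_le.trans (add_le_add Polynomial.natDegree_mul_le ?_)
    exact le_of_eq hPcdeg
  have hM0 : b * bs * Pc ≠ 0 := mul_ne_zero (mul_ne_zero hb hbs0) hPc0
  have habs0 : a * bs * Pc ≠ 0 := mul_ne_zero (mul_ne_zero ha hbs0) hPc0
  have habslc : (a * bs * Pc).leadingCoeff
      = a.leadingCoeff * bs.leadingCoeff * Pc.leadingCoeff := by
    rw [Polynomial.leadingCoeff_mul, Polynomial.leadingCoeff_mul]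
  have hΔ : ((((a.natDegree : ℤ) - (b.natDegree : ℤ) : ℤ) : K)) ≠ 0 := by
    rw [Int.cast_ne_zero]
    omega
  have hzpoly : c0 * b ^ 2 * Pc ≠ 0 := mul_ne_zero (mul_ne_zero hc0 (pow_ne_zero 2 hb)) hPc0
  have hz : ι (c0 * b ^ 2 * Pc) ≠ 0 := by
    intro H
    exact hzpoly (hinj (by rw [H, map_zero]))
  -- the induction
  induction i with
  | zero =>
    refine ⟨c0, ?_, by simp, by simp, ?_⟩
    · simp [mul_comm]
    · simp
  | succ i IH =>
    obtain ⟨N, hNE, hNdeg, hNy, hNlc⟩ := IH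
    -- nonzeroness of N
    have hN0 : N ≠ 0 := by
      intro H
      rw [H, Polynomial.leadingCoeff_zero] at hNlc
      have : Polynomial.C ((((a.natDegree : ℤ) - (b.natDegree : ℤ) : ℤ) : K) ^ i)
          * (c0.leadingCoeff * (a * bs * Pc).leadingCoeff ^ i) ≠ 0 := by
        refine mul_ne_zero ?_ (mul_ne_zero hlcc0 (pow_ne_zero _ ?_))
        · rw [Polynomial.C_ne_zero]; exact pow_ne_zero _ hΔ
        · exact Polynomial.leadingCoeff_ne_zero.mpr habs0
      exact this hNlc.symm
    -- the new polynomial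
    set P : Polynomial (Polynomial K) :=
      Q * Pc + b * bs * S - (i : Polynomial (Polynomial K)) * Polynomial.derivative (b * bs * Pc)
      with hPdef
    set N₁ : Polynomial (Polynomial K) := Polynomial.derivative N * (b * bs * Pc) + N * P
      with hN₁def
    -- coefficient analysis of P
    have hQPc_deg : (Q * Pc).natDegree = n := by
      rw [Polynomial.natDegree_mul hQ0 hPc0, hQdeg, hPcdeg]
    have hQPc_coeff : (Q * Pc).coeff n = w * Pc.leadingCoeff := by
      have h1 := Polynomial.coeff_mul_degree_add_degree Q Pc
      rw [hQdeg, hQlc, hPcdeg, ← hndef] at h1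
      exact h1
    have hbbsS_coeff : (b * bs * S).coeff n = 0 := by
      rcases hSsharp with hS1 | hS1
      · apply Polynomial.coeff_eq_zero_of_natDegree_lt
        have h1 : (b * bs * S).natDegree ≤ b.natDegree + bs.natDegree + S.natDegree :=
          Polynomial.natDegree_mul_le.trans (add_le_add Polynomial.natDegree_mul_le le_rfl)
        rw [hndef, hn1def]
        omega
      · rw [hS1, mul_zero, Polynomial.coeff_zero]
    have hbbsS_deg : (b * bs * S).natDegree ≤ n := by
      have h1 : (b * bs * S).natDegree ≤ b.natDegree + bs.natDegree + S.natDegree :=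
        Polynomial.natDegree_mul_le.trans (add_le_add Polynomial.natDegree_mul_le le_rfl)
      rw [hndef, hn1def]
      omega
    have hiM_coeff : ((i : Polynomial (Polynomial K))
        * Polynomial.derivative (b * bs * Pc)).coeff n = 0 := by
      rw [← Polynomial.C_eq_natCast, Polynomial.coeff_C_mul]
      have h2 : (Polynomial.derivative (b * bs * Pc)).coeff n = 0 := by
        by_cases hM : (b * bs * Pc).natDegree = 0
        · rw [Polynomial.derivative_of_natDegree_zero hM, Polynomial.coeff_zero]
        · apply Polynomial.coeff_eq_zero_of_natDegree_lt
          have h3 := Polynomial.natDegree_derivative_lt hM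
          rw [hndef, hn1def]
          omega
      rw [h2, mul_zero]
    have hiM_deg : ((i : Polynomial (Polynomial K))
        * Polynomial.derivative (b * bs * Pc)).natDegree ≤ n := by
      refine Polynomial.natDegree_mul_le.trans ?_
      rw [Polynomial.natDegree_natCast, zero_add]
      refine (Polynomial.natDegree_derivative_le _).trans ?_
      rw [hndef, hn1def]
      omega
    have hPcoeff : P.coeff n = w * Pc.leadingCoeff := by
      rw [hPdef, Polynomial.coeff_sub, Polynomial.coeff_add, hQPc_coeff, hbbsS_coeff,
        hiM_coeff, add_zero, sub_zero]
    have hPd : P.natDegree ≤ n := by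
      rw [hPdef]
      refine (Polynomial.natDegree_sub_le _ _).trans (max_le ?_ hiM_deg)
      exact (Polynomial.natDegree_add_le _ _).trans (max_le (le_of_eq hQPc_deg) hbbsS_deg)
    have hwPc : w * Pc.leadingCoeff ≠ 0 := mul_ne_zero hw0 hlcPc
    have hPdeg : P.natDegree = n :=
      le_antisymm hPd (Polynomial.le_natDegree_of_ne_zero (by rw [hPcoeff]; exact hwPc))
    have hPlc : P.leadingCoeff = w * Pc.leadingCoeff := by
      rw [Polynomial.leadingCoeff, hPdeg, hPcoeff]
    have hP0 : P ≠ 0 := fun H => hwPc (by rw [← hPcoeff, H, Polynomial.coeff_zero])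
    -- degree and leading coefficient of N₁
    have hN'M_coeff : (Polynomial.derivative N * (b * bs * Pc)).coeff (N.natDegree + n) = 0 := by
      by_cases hNd : N.natDegree = 0
      · rw [Polynomial.derivative_of_natDegree_zero hNd, zero_mul, Polynomial.coeff_zero]
      · apply Polynomial.coeff_eq_zero_of_natDegree_lt
        have h1 := Polynomial.natDegree_derivative_lt hNd
        have h2 : (Polynomial.derivative N * (b * bs * Pc)).natDegree
            ≤ (Polynomial.derivative N).natDegree + (b * bs * Pc).natDegree :=
          Polynomial.natDegree_mul_le
        have h3 : (b * bs * Pc).natDegree ≤ n := by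
          refine hMdeg.trans ?_; rw [hndef, hn1def]; omega
        omega
    have hN'M_deg : (Polynomial.derivative N * (b * bs * Pc)).natDegree ≤ N.natDegree + n := by
      refine Polynomial.natDegree_mul_le.trans ?_
      have h3 : (b * bs * Pc).natDegree ≤ n := by
        refine hMdeg.trans ?_; rw [hndef, hn1def]; omega
      have h4 := Polynomial.natDegree_derivative_le N
      omega
    have hNP_coeff : (N * P).coeff (N.natDegree + n) = N.leadingCoeff * P.leadingCoeff := by
      have h1 := Polynomial.coeff_mul_degree_add_degree N P
      rw [hPdeg] at h1
      exact h1
    have hNP_deg : (N * P).natDegree = N.natDegree + n := by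
      rw [Polynomial.natDegree_mul hN0 hP0, hPdeg]
    have hlcN : N.leadingCoeff ≠ 0 := Polynomial.leadingCoeff_ne_zero.mpr hN0
    have hN₁coeff : N₁.coeff (N.natDegree + n) = N.leadingCoeff * P.leadingCoeff := by
      rw [hN₁def, Polynomial.coeff_add, hN'M_coeff, hNP_coeff, zero_add]
    have hN₁d : N₁.natDegree ≤ N.natDegree + n := by
      rw [hN₁def]
      exact (Polynomial.natDegree_add_le _ _).trans (max_le hN'M_deg (le_of_eq hNP_deg))
    have hlcNP : N.leadingCoeff * P.leadingCoeff ≠ 0 :=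
      mul_ne_zero hlcN (Polynomial.leadingCoeff_ne_zero.mpr hP0)
    have hN₁deg : N₁.natDegree = N.natDegree + n :=
      le_antisymm hN₁d (Polynomial.le_natDegree_of_ne_zero (by rw [hN₁coeff]; exact hlcNP))
    have hN₁lc : N₁.leadingCoeff = N.leadingCoeff * P.leadingCoeff := by
      rw [Polynomial.leadingCoeff, hN₁deg, hN₁coeff]
    refine ⟨N₁, ?_, ?_, ?_, ?_⟩
    · -- the identity in E
      have hiter : Polynomial.derivative (c0 * (b * bs * Pc) ^ i) * (b * bs * Pc)
          = (b * bs * Pc) ^ i * (Polynomial.derivative c0 * (b * bs * Pc)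
              + (i : Polynomial (Polynomial K)) * c0 * Polynomial.derivative (b * bs * Pc)) := by
        rw [Polynomial.derivative_mul, Polynomial.derivative_pow]
        cases i with
        | zero => simp
        | succ j =>
          rw [Nat.succ_sub_one, Polynomial.C_eq_natCast]
          push_cast
          ring
      have key := congrArg Dx hNE
      simp only [hDxmul, hDxι] at key
      rw [← Function.iterate_succ_apply' Dx i h] at key
      have e1 : Dx^[i+1] h * ι (c0 * (b * bs * Pc) ^ i)
          = ι (Polynomial.derivative N) * h + ι N * Dx h
            - Dx^[i] h * ι (Polynomial.derivative (c0 * (b * bs * Pc) ^ i)) :=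
        eq_sub_of_add_eq key
      have hshift : ∀ (X : E) (p q p' q' : Polynomial (Polynomial K)), p * q = p' * q' →
          X * ι p * ι q = X * ι p' * ι q' := by
        intro X p q p' q' hpq
        calc X * ι p * ι q = X * ι (p * q) := by rw [map_mul]; ring
          _ = X * ι (p' * q') := by rw [hpq]
          _ = X * ι p' * ι q' := by rw [map_mul]; ring
      apply mul_right_cancel₀ hz
      calc Dx^[i+1] h * ι (c0 * (b * bs * Pc) ^ (i+1)) * ι (c0 * b ^ 2 * Pc)
          = (Dx^[i+1] h * ι (c0 * (b * bs * Pc) ^ i)) * ι ((b * bs * Pc) * (c0 * b ^ 2 * Pc)) := by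
            exact hshift _ _ _ _ _ (by ring)
        _ = (ι (Polynomial.derivative N) * h + ι N * Dx h
              - Dx^[i] h * ι (Polynomial.derivative (c0 * (b * bs * Pc) ^ i)))
            * ι ((b * bs * Pc) * (c0 * b ^ 2 * Pc)) := by rw [e1]
        _ = ι (Polynomial.derivative N * ((b * bs * Pc) * (c0 * b ^ 2 * Pc))) * h
            + ι (N * (b * bs * Pc)) * (Dx h * ι (c0 * b ^ 2 * Pc))
            - (Dx^[i] h * ι (c0 * (b * bs * Pc) ^ i))
              * ι ((Polynomial.derivative c0 * (b * bs * Pc)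
                  + (i : Polynomial (Polynomial K)) * c0 * Polynomial.derivative (b * bs * Pc))
                  * (b ^ 2 * Pc)) := by
            rw [sub_mul, add_mul]
            have h3 : Dx^[i] h * ι (Polynomial.derivative (c0 * (b * bs * Pc) ^ i))
                * ι ((b * bs * Pc) * (c0 * b ^ 2 * Pc))
                = (Dx^[i] h * ι (c0 * (b * bs * Pc) ^ i))
                  * ι ((Polynomial.derivative c0 * (b * bs * Pc)
                      + (i : Polynomial (Polynomial K)) * c0
                        * Polynomial.derivative (b * bs * Pc)) * (b ^ 2 * Pc)) := by
              exact hshift _ _ _ _ _ (by linear_combination (c0 * b ^ 2 * Pc) * hiter)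
            rw [h3]
            congr 1
            · simp only [map_mul]
              ring
        _ = ι (Polynomial.derivative N * ((b * bs * Pc) * (c0 * b ^ 2 * Pc))) * h
            + ι (N * (b * bs * Pc)) * (h * ι (Polynomial.derivative c0 * b ^ 2 * Pc
                + (Polynomial.derivative a * b - a * Polynomial.derivative b) * c0 * Pc
                + c0 * b ^ 2 * S))
            - (ι N * h) * ι ((Polynomial.derivative c0 * (b * bs * Pc)
                  + (i : Polynomial (Polynomial K)) * c0 * Polynomial.derivative (b * bs * Pc))
                  * (b ^ 2 * Pc)) := by
            rw [hDxh, hNE]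
        _ = ι (Polynomial.derivative N * ((b * bs * Pc) * (c0 * b ^ 2 * Pc))
              + (N * (b * bs * Pc)) * (Polynomial.derivative c0 * b ^ 2 * Pc
                + (Polynomial.derivative a * b - a * Polynomial.derivative b) * c0 * Pc
                + c0 * b ^ 2 * S)
              - N * ((Polynomial.derivative c0 * (b * bs * Pc)
                  + (i : Polynomial (Polynomial K)) * c0 * Polynomial.derivative (b * bs * Pc))
                  * (b ^ 2 * Pc))) * h := by
            simp only [map_add, map_sub, map_mul]
            ring
        _ = ι (N₁ * (c0 * b ^ 2 * Pc)) * h := by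
            refine congrArg (fun z => ι z * h) ?_
            rw [hN₁def, hPdef, hQdef]
            linear_combination (-(N * a * c0 * Pc ^ 2 * b)) * ht
        _ = ι N₁ * h * ι (c0 * b ^ 2 * Pc) := by
            rw [map_mul]
            ring
    · -- the natDegree equation
      rw [hN₁deg]
      have hncast : (n : ℤ) = (a.natDegree : ℤ) + (bs.natDegree : ℤ)
          + (∑ ℓ, ((c ℓ).natDegree : ℤ)) - 1 := by
        rw [hndef, hn1def, hscdef]
        push_cast [Nat.cast_sub hda]
        ring
      push_cast
      rw [hNdeg] at *
      push_cast at hNdeg ⊢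
      linarith [hncast, hNdeg]
    · -- the degY bound
      have h1 : degY N₁ ≤ max (degY (Polynomial.derivative N * (b * bs * Pc))) (degY (N * P)) := by
        rw [hN₁def]; exact degY_add_le _ _
      have h2 : degY (Polynomial.derivative N * (b * bs * Pc))
          ≤ degY N + (degY b + degY bs + ∑ ℓ, degY (c ℓ)) := by
        refine (degY_mul_le _ _).trans ?_
        have := degY_derivative_le N
        have h3 : degY (b * bs * Pc) ≤ degY b + degY bs + ∑ ℓ, degY (c ℓ) :=
          (degY_mul_le _ _).trans (add_le_add (degY_mul_le _ _) hdyPc)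
        omega
      have hQy : degY Q ≤ degY a + degY bs := by
        rw [hQdef]
        refine (degY_sub_le _ _).trans (max_le ?_ ?_)
        · exact (degY_mul_le _ _).trans (add_le_add (degY_derivative_le a) le_rfl)
        · exact (degY_mul_le _ _).trans (add_le_add le_rfl hdyt)
      have hPy : degY P ≤ max (degY a) (degY b) + degY bs + ∑ ℓ, degY (c ℓ) := by
        rw [hPdef]
        refine (degY_sub_le _ _).trans (max_le ((degY_add_le _ _).trans (max_le ?_ ?_)) ?_)
        · have := (degY_mul_le Q Pc).trans (add_le_add hQy hdyPc)
          omega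
        · have := (degY_mul_le _ _).trans
            (add_le_add ((degY_mul_le b bs).trans le_rfl) hdyS)
          omega
        · refine (degY_mul_le _ _).trans ?_
          rw [degY_natCast]
          have h4 : degY (Polynomial.derivative (b * bs * Pc)) ≤ degY (b * bs * Pc) :=
            degY_derivative_le _
          have h3 : degY (b * bs * Pc) ≤ degY b + degY bs + ∑ ℓ, degY (c ℓ) :=
            (degY_mul_le _ _).trans (add_le_add (degY_mul_le _ _) hdyPc)
          omega
      have h5 : degY (N * P) ≤ degY N + (max (degY a) (degY b) + degY bs + ∑ ℓ, degY (c ℓ)) :=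
        (degY_mul_le _ _).trans (add_le_add le_rfl hPy)
      have h7 := Nat.le_max_right (degY a) (degY b)
      have h2' : degY (Polynomial.derivative N * (b * bs * Pc))
          ≤ degY N + (max (degY a) (degY b) + degY bs + ∑ ℓ, degY (c ℓ)) := by omega
      calc degY N₁ ≤ max (degY (Polynomial.derivative N * (b * bs * Pc))) (degY (N * P)) := h1
        _ ≤ degY N + (max (degY a) (degY b) + degY bs + ∑ ℓ, degY (c ℓ)) := max_le h2' h5
        _ ≤ (degY c0 + i * (max (degY a) (degY b) + degY bs + ∑ ℓ, degY (c ℓ)))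
            + (max (degY a) (degY b) + degY bs + ∑ ℓ, degY (c ℓ)) :=
          Nat.add_le_add_right hNy _
        _ = degY c0 + (i + 1) * (max (degY a) (degY b) + degY bs + ∑ ℓ, degY (c ℓ)) := by ring
    · -- the leading coefficient
      rw [hN₁lc, hNlc, hPlc, habslc, hwdef]
      have hcast : ((((a.natDegree : ℤ) - (b.natDegree : ℤ) : ℤ) : K))
          = (a.natDegree : K) - (b.natDegree : K) := by push_cast; ring
      rw [pow_succ, pow_succ, ← hcast, map_mul]
      ring
end

section
/- Let h be a hyperexponential term given in standard form h = c0·exp(a/b)·∏_{ℓ=1}^L c_ℓ^{e_ℓ}, and let r ≥ 1 be an integer. Suppose deg_y a = deg_y b = 0 and deg_y c_ℓ = 0 for every ℓ with e_ℓ not the image in K of an integer, and set η = Σ_{ℓ=1}^L e_ℓ·deg_y c_ℓ (an integer in this situation, since e_ℓ ∈ ℤ whenever deg_y c_ℓ > 0). Then for every nonzero polynomial q ∈ K[x,y] whose coefficient of y^{γ(r−1)−η} (as a polynomial in y with coefficients in K[x]) is zero, the element Q = q·h/(c0·(b·b*·∏_{ℓ=1}^L c_ℓ)^{r−1}) of E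 satisfies D_y Q ≠ 0. -/
open Polynomial Finset

section SwapAux

variable {K : Type*} [CommRing K]

/-- The involution of `K[y][x]` swapping the two variables. -/
noncomputable def swapPoly : Polynomial (Polynomial K) →+* Polynomial (Polynomial K) :=
  eval₂RingHom (eval₂RingHom (C.comp C) X) (C X)

lemma swapPoly_C_C (k : K) : swapPoly (C (C k)) = C (C k) := by
  simp [swapPoly, coe_eval₂RingHom, eval₂_C]

lemma swapPoly_C_coeff (a : Polynomial K) (m : ℕ) :
    (swapPoly (C a)).coeff m = C (a.coeff m) := by
  induction a using Polynomial.induction_on' with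
  | add p q hp hq => simp [map_add, coeff_add, hp, hq]
  | monomial k t =>
    have : swapPoly (C (monomial k t)) = C (C t) * X ^ k := by
      simp [swapPoly, coe_eval₂RingHom, eval₂_C, eval₂_monomial]
    rw [this]
    by_cases h : k = m
    · simp [coeff_C_mul, coeff_X_pow, coeff_monomial, h]
    · simp [coeff_C_mul, coeff_X_pow, coeff_monomial, h, Ne.symm h]

lemma swapPoly_coeff (p : Polynomial (Polynomial K)) (n m : ℕ) :
    ((swapPoly p).coeff m).coeff n = (p.coeff n).coeff m := by
  induction p using Polynomial.induction_on' with
  | add p q hp hq => simp [map_add, coeff_add, hp, hq]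
  | monomial k a =>
    rw [← C_mul_X_pow_eq_monomial, map_mul, map_pow]
    have hX : swapPoly (X : Polynomial (Polynomial K)) = C X := by
      simp [swapPoly, coe_eval₂RingHom, eval₂_X]
    rw [hX, ← map_pow C X k, coeff_mul_C, swapPoly_C_coeff]
    by_cases h : k = n
    · simp [coeff_C_mul, coeff_X_pow, h]
    · simp [coeff_C_mul, coeff_X_pow, h, Ne.symm h]

lemma swapPoly_swapPoly (p : Polynomial (Polynomial K)) : swapPoly (swapPoly p) = p := by
  apply Polynomial.ext; intro n; apply Polynomial.ext; intro m
  rw [swapPoly_coeff, swapPoly_coeff]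

lemma swapPoly_injective : Function.Injective (swapPoly (K := K)) :=
  Function.LeftInverse.injective swapPoly_swapPoly

lemma swapPoly_ne_zero {p : Polynomial (Polynomial K)} (hp : p ≠ 0) : swapPoly p ≠ 0 := by
  intro h
  exact hp (swapPoly_injective (by simpa using h))

lemma coeff_DY (p : Polynomial (Polynomial K)) (n : ℕ) :
    (DY p).coeff n = derivative (p.coeff n) := by
  unfold DY
  rw [Polynomial.sum_def, finset_sum_coeff]
  simp only [coeff_C_mul, coeff_X_pow, mul_ite, mul_one, mul_zero]
  rw [Finset.sum_ite_eq p.support n (fun k => derivative (p.coeff k))]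
  by_cases hn : n ∈ p.support
  · simp [hn]
  · simp [hn, Polynomial.notMem_support_iff.mp hn]

lemma swapPoly_DY (p : Polynomial (Polynomial K)) :
    swapPoly (DY p) = derivative (swapPoly p) := by
  apply Polynomial.ext; intro m; apply Polynomial.ext; intro n
  rw [swapPoly_coeff, coeff_DY, coeff_derivative]
  conv_rhs => rw [coeff_derivative,
    show ((m : Polynomial K) + 1) = (((m + 1 : ℕ) : Polynomial K)) by push_cast; ring,
    mul_comm, coeff_natCast_mul, swapPoly_coeff]
  push_cast
  ring

lemma degY_eq_natDegree_swapPoly (p : Polynomial (Polynomial K)) :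
    degY p = (swapPoly p).natDegree := by
  apply le_antisymm
  · apply Finset.sup_le
    intro n hn
    apply le_natDegree_of_ne_zero (p := swapPoly p)
    intro h0
    have := swapPoly_coeff p n ((p.coeff n).natDegree)
    rw [h0] at this
    simp only [coeff_zero] at this
    exact Polynomial.mem_support_iff.mp hn (leadingCoeff_eq_zero.mp this.symm)
  · by_cases h0 : swapPoly p = 0
    · simp [h0]
    · have hlc : (swapPoly p).coeff ((swapPoly p).natDegree) ≠ 0 := by
        rw [coeff_natDegree]
        exact leadingCoeff_ne_zero.mpr h0
      obtain ⟨n, hn⟩ : ∃ n, ((swapPoly p).coeff ((swapPoly p).natDegree)).coeff n ≠ 0 := by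
        by_contra hall
        push_neg at hall
        exact hlc (Polynomial.ext hall)
      rw [swapPoly_coeff] at hn
      have hns : n ∈ p.support := by
        rw [Polynomial.mem_support_iff]
        intro hz
        rw [hz] at hn
        simp at hn
      calc (swapPoly p).natDegree ≤ (p.coeff n).natDegree := le_natDegree_of_ne_zero hn
        _ ≤ degY p := Finset.le_sup (f := fun n => (p.coeff n).natDegree) hns

lemma derivative_swapPoly_eq_zero {p : Polynomial (Polynomial K)} (h : degY p = 0) :
    derivative (swapPoly p) = 0 := by
  have h0 : (swapPoly p).natDegree = 0 := by rw [← degY_eq_natDegree_swapPoly, h]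
  obtain ⟨x, hx⟩ := Polynomial.natDegree_eq_zero.mp h0
  rw [← hx, derivative_C]

lemma DY_eq_zero_of_degY_eq_zero {p : Polynomial (Polynomial K)} (h : degY p = 0) :
    DY p = 0 := by
  apply swapPoly_injective
  rw [swapPoly_DY, map_zero, derivative_swapPoly_eq_zero h]

lemma smul_eq_CC (e : K) (z : Polynomial (Polynomial K)) : e • z = C (C e) * z := by
  apply Polynomial.ext; intro n; apply Polynomial.ext; intro m
  simp [coeff_smul, coeff_C_mul, smul_eq_mul]

end SwapAux

lemma sqf_dvd {α : Type*} [CommMonoidWithZero α] [Nontrivial α]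
    [UniqueFactorizationMonoid α]
    {x y : α} (hy : y ≠ 0) (hx : Squarefree x) (hd : ∀ p, Prime p → p ∣ x → p ∣ y) :
    x ∣ y := by
  revert hx hd
  refine UniqueFactorizationMonoid.induction_on_prime x ?_ ?_ ?_
  · intro hx _
    exact absurd hx not_squarefree_zero
  · intro u hu _ _
    exact hu.dvd
  · intro a p ha hp ih hsq hdvd
    have hpy : p ∣ y := hdvd p hp (dvd_mul_right p a)
    have hay : a ∣ y := ih (hsq.squarefree_of_dvd (dvd_mul_left a p))
      (fun q hq hqa => hdvd q hq (hqa.mul_left p))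
    have hpa : ¬ p ∣ a := by
      intro hdvd'
      exact hp.not_unit (hsq p (mul_dvd_mul (dvd_refl p) hdvd'))
    obtain ⟨t, rfl⟩ := hay
    have hpt : p ∣ t := by
      rcases hp.dvd_mul.mp hpy with h1 | h1
      · exact absurd h1 hpa
      · exact h1
    obtain ⟨u, rfl⟩ := hpt
    exact ⟨u, by rw [mul_left_comm, ← mul_assoc]⟩

section CoreSec
variable {R : Type*} [CommRing R] [IsDomain R]

lemma natDegree_X_mul_derivative_le' (p : R[X]) : (X * derivative p).natDegree ≤ p.natDegree := by
  by_cases h : derivative p = 0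
  · simp [h]
  have h0 : p.natDegree ≠ 0 := by
    intro h0
    exact h (by rw [eq_C_of_natDegree_eq_zero h0, derivative_C])
  have h1 : (derivative p).natDegree < p.natDegree := natDegree_derivative_lt h0
  calc (X * derivative p).natDegree ≤ X.natDegree + (derivative p).natDegree := natDegree_mul_le
    _ = 1 + (derivative p).natDegree := by rw [natDegree_X]
    _ ≤ p.natDegree := by omega

omit [IsDomain R] in
lemma coeff_X_mul_derivative' (p : R[X]) :
    (X * derivative p).coeff p.natDegree = (p.natDegree : R) * p.leadingCoeff := by
  cases hd : p.natDegree with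
  | zero =>
    have : derivative p = 0 := by
      rw [eq_C_of_natDegree_eq_zero hd, derivative_C]
    simp [this]
  | succ k =>
    rw [coeff_X_mul, coeff_derivative, leadingCoeff, hd]
    push_cast
    ring

omit [IsDomain R] in
lemma derivative_finset_prod' {ι : Type*} [DecidableEq ι] (s : Finset ι) (f : ι → R[X]) :
    derivative (∏ i ∈ s, f i) = ∑ i ∈ s, derivative (f i) * ∏ j ∈ s.erase i, f j := by
  induction s using Finset.induction_on with
  | empty => simp
  | @insert a s ha ih =>
    rw [Finset.prod_insert ha, derivative_mul, ih, Finset.sum_insert ha,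
      Finset.erase_insert ha, Finset.mul_sum]
    congr 1
    apply Finset.sum_congr rfl
    intro i hi
    have hia : i ≠ a := by rintro rfl; exact ha hi
    rw [Finset.erase_insert_of_ne hia.symm,
      Finset.prod_insert (fun hmem => ha (Finset.mem_of_mem_erase hmem))]
    ring

omit [IsDomain R] in
lemma derivative_pow_mul_self (p : R[X]) (s : ℕ) :
    derivative (p ^ s) * p = (s : R[X]) * p ^ s * derivative p := by
  cases s with
  | zero => simp
  | succ k =>
    rw [derivative_pow_succ,
      show ((k : R) + 1) = ((k + 1 : ℕ) : R) by push_cast; ring, C_eq_natCast]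
    push_cast
    ring

lemma core (L : ℕ) (q c0 b bs : R[X]) (cs : Fin L → R[X]) (Ee : Fin L → R)
    (hq : q ≠ 0) (hc0 : c0 ≠ 0) (hb : b ≠ 0) (hbs : bs ≠ 0) (hcs : ∀ ℓ, cs ℓ ≠ 0)
    (hDb : derivative b = 0) (hDbs : derivative bs = 0) (s : ℕ)
    (heq : q * derivative (c0 * (b * bs * ∏ ℓ, cs ℓ) ^ s) * (c0 * b ^ 2 * ∏ ℓ, cs ℓ)
       = derivative q * (c0 * (b * bs * ∏ ℓ, cs ℓ) ^ s) * (c0 * b ^ 2 * ∏ ℓ, cs ℓ)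
         + q * (c0 * (b * bs * ∏ ℓ, cs ℓ) ^ s) *
           (derivative c0 * b ^ 2 * (∏ ℓ, cs ℓ)
             + c0 * b ^ 2 *
               ∑ ℓ, C (Ee ℓ) * (derivative (cs ℓ) * ∏ j ∈ Finset.univ.erase ℓ, cs j))) :
    (q.natDegree : R) = ∑ ℓ, ((s : R) - Ee ℓ) * ((cs ℓ).natDegree : R) := by
  classical
  set Pc : R[X] := ∏ ℓ, cs ℓ with hPc
  set T : R[X] := ∑ ℓ, C (Ee ℓ) * (derivative (cs ℓ) * ∏ j ∈ Finset.univ.erase ℓ, cs j) with hT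
  have hPc0 : Pc ≠ 0 := by
    rw [hPc]; exact Finset.prod_ne_zero_iff.mpr (fun ℓ _ => hcs ℓ)
  have hF : c0 ^ 2 * b ^ 2 * (b * bs) * (b * bs * Pc) ^ s * Pc ≠ 0 := by
    exact mul_ne_zero (mul_ne_zero (mul_ne_zero (mul_ne_zero (pow_ne_zero _ hc0)
      (pow_ne_zero _ hb)) (mul_ne_zero hb hbs))
      (pow_ne_zero _ (mul_ne_zero (mul_ne_zero hb hbs) hPc0))) hPc0
  have key := derivative_pow_mul_self (b * bs * Pc) s
  have hDM : derivative (b * bs * Pc) = b * bs * derivative Pc := by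
    simp only [derivative_mul, hDb, hDbs, zero_mul, mul_zero, add_zero, zero_add]
  have hDP : derivative (c0 * (b * bs * Pc) ^ s)
      = derivative c0 * (b * bs * Pc) ^ s + c0 * derivative ((b * bs * Pc) ^ s) :=
    derivative_mul
  have E2 : derivative q * Pc + q * T = (s : R[X]) * (q * derivative Pc) := by
    apply mul_left_cancel₀ hF
    linear_combination (-(b * bs * Pc)) * heq + (q * c0 * b ^ 2 * Pc * (b * bs * Pc)) * hDP
      + (q * c0 ^ 2 * b ^ 2 * Pc) * key
      + ((s : R[X]) * ((b * bs * Pc) ^ s) * q * c0 ^ 2 * b ^ 2 * Pc) * hDM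
  have hdP : Pc.natDegree = ∑ ℓ, (cs ℓ).natDegree := by
    rw [hPc]; exact natDegree_prod _ _ (fun ℓ _ => hcs ℓ)
  have hlcP : Pc.leadingCoeff = ∏ ℓ, (cs ℓ).leadingCoeff := by
    rw [hPc]; exact leadingCoeff_prod _ _
  have hterm : ∀ ℓ : Fin L,
      (q * ((X * derivative (cs ℓ)) * ∏ j ∈ Finset.univ.erase ℓ, cs j)).coeff
          (q.natDegree + Pc.natDegree)
        = q.leadingCoeff * (((cs ℓ).natDegree : R) * (cs ℓ).leadingCoeff)
            * ∏ j ∈ Finset.univ.erase ℓ, (cs j).leadingCoeff := by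
    intro ℓ
    have h1 : (∏ j ∈ Finset.univ.erase ℓ, cs j).natDegree
        = ∑ j ∈ Finset.univ.erase ℓ, (cs j).natDegree :=
      natDegree_prod _ _ (fun j _ => hcs j)
    have hsplit : q.natDegree + Pc.natDegree
        = q.natDegree + ((cs ℓ).natDegree + ∑ j ∈ Finset.univ.erase ℓ, (cs j).natDegree) := by
      rw [hdP, ← Finset.add_sum_erase Finset.univ (fun j => (cs j).natDegree) (mem_univ ℓ)]
    have h2 : ((X * derivative (cs ℓ)) * ∏ j ∈ Finset.univ.erase ℓ, cs j).natDegree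
        ≤ (cs ℓ).natDegree + ∑ j ∈ Finset.univ.erase ℓ, (cs j).natDegree :=
      natDegree_mul_le.trans (add_le_add (natDegree_X_mul_derivative_le' _) h1.le)
    rw [hsplit, coeff_mul_add_eq_of_natDegree_le le_rfl h2,
      coeff_mul_add_eq_of_natDegree_le (natDegree_X_mul_derivative_le' _) h1.le,
      coeff_X_mul_derivative', ← h1, coeff_natDegree, coeff_natDegree,
      leadingCoeff_prod]
    ring
  have hL : (X * (derivative q * Pc + q * T)).coeff (q.natDegree + Pc.natDegree)
      = ((q.natDegree : R) * q.leadingCoeff) * Pc.leadingCoeff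
        + ∑ ℓ, Ee ℓ * (q.leadingCoeff * (((cs ℓ).natDegree : R) * (cs ℓ).leadingCoeff)
            * ∏ j ∈ Finset.univ.erase ℓ, (cs j).leadingCoeff) := by
    have e1 : X * (derivative q * Pc + q * T)
        = (X * derivative q) * Pc
          + ∑ ℓ, C (Ee ℓ)
              * (q * ((X * derivative (cs ℓ)) * ∏ j ∈ Finset.univ.erase ℓ, cs j)) := by
      rw [hT, Finset.mul_sum, mul_add, Finset.mul_sum]
      refine congrArg₂ (· + ·) ?_ ?_
      · ring
      · apply Finset.sum_congr rfl
        intro ℓ _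
        ring
    rw [e1, coeff_add, finset_sum_coeff]
    refine congrArg₂ (· + ·) ?_ ?_
    · rw [coeff_mul_add_eq_of_natDegree_le (natDegree_X_mul_derivative_le' _) le_rfl,
        coeff_X_mul_derivative', coeff_natDegree]
    · apply Finset.sum_congr rfl
      intro ℓ _
      rw [coeff_C_mul, hterm ℓ]
  have hR : (X * ((s : R[X]) * (q * derivative Pc))).coeff (q.natDegree + Pc.natDegree)
      = ∑ ℓ, (s : R) * (q.leadingCoeff * (((cs ℓ).natDegree : R) * (cs ℓ).leadingCoeff)
          * ∏ j ∈ Finset.univ.erase ℓ, (cs j).leadingCoeff) := by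
    have e2 : X * ((s : R[X]) * (q * derivative Pc))
        = ∑ ℓ, C ((s : R))
            * (q * ((X * derivative (cs ℓ)) * ∏ j ∈ Finset.univ.erase ℓ, cs j)) := by
      rw [hPc, derivative_finset_prod', Finset.mul_sum, Finset.mul_sum, Finset.mul_sum]
      apply Finset.sum_congr rfl
      intro ℓ _
      rw [C_eq_natCast]
      ring
    rw [e2, finset_sum_coeff]
    apply Finset.sum_congr rfl
    intro ℓ _
    rw [coeff_C_mul, hterm ℓ]
  have E4 : ((q.natDegree : R) * q.leadingCoeff) * Pc.leadingCoeff
        + ∑ ℓ, Ee ℓ * (q.leadingCoeff * (((cs ℓ).natDegree : R) * (cs ℓ).leadingCoeff)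
            * ∏ j ∈ Finset.univ.erase ℓ, (cs j).leadingCoeff)
      = ∑ ℓ, (s : R) * (q.leadingCoeff * (((cs ℓ).natDegree : R) * (cs ℓ).leadingCoeff)
          * ∏ j ∈ Finset.univ.erase ℓ, (cs j).leadingCoeff) := by
    rw [← hL, ← hR, E2]
  have hlq0 : q.leadingCoeff ≠ 0 := leadingCoeff_ne_zero.mpr hq
  have hlP0 : Pc.leadingCoeff ≠ 0 := leadingCoeff_ne_zero.mpr hPc0
  have conv1 : ∀ (z : Fin L → R),
      ∑ ℓ, z ℓ * (q.leadingCoeff * (((cs ℓ).natDegree : R) * (cs ℓ).leadingCoeff)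
          * ∏ j ∈ Finset.univ.erase ℓ, (cs j).leadingCoeff)
        = q.leadingCoeff * Pc.leadingCoeff * ∑ ℓ, z ℓ * ((cs ℓ).natDegree : R) := by
    intro z
    rw [Finset.mul_sum]
    apply Finset.sum_congr rfl
    intro ℓ _
    rw [hlcP, ← Finset.mul_prod_erase Finset.univ (fun j => (cs j).leadingCoeff) (mem_univ ℓ)]
    ring
  have E5 : q.leadingCoeff * Pc.leadingCoeff
        * ((q.natDegree : R) + ∑ ℓ, Ee ℓ * ((cs ℓ).natDegree : R))
      = q.leadingCoeff * Pc.leadingCoeff * (∑ ℓ, (s : R) * ((cs ℓ).natDegree : R)) := by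
    have h4 := E4
    rw [conv1 (fun ℓ => Ee ℓ), conv1 (fun _ => (s : R))] at h4
    linear_combination h4
  have E6 : (q.natDegree : R) + ∑ ℓ, Ee ℓ * ((cs ℓ).natDegree : R)
      = ∑ ℓ, (s : R) * ((cs ℓ).natDegree : R) :=
    mul_left_cancel₀ (mul_ne_zero hlq0 hlP0) E5
  have hsum : ∑ ℓ, ((s : R) - Ee ℓ) * ((cs ℓ).natDegree : R)
      = ∑ ℓ, (s : R) * ((cs ℓ).natDegree : R) - ∑ ℓ, Ee ℓ * ((cs ℓ).natDegree : R) := by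
    rw [← Finset.sum_sub_distrib]
    apply Finset.sum_congr rfl
    intro ℓ _
    ring
  rw [hsum]
  linear_combination E6
end CoreSec

theorem certificate_nonzero_rational_case
    {K : Type*} {E : Type*} [Field K] [CharZero K] [Field E]
    (Dx Dy : E → E)
    (hDxadd : ∀ u v : E, Dx (u + v) = Dx u + Dx v)
    (hDxmul : ∀ u v : E, Dx (u * v) = Dx u * v + u * Dx v)
    (hDyadd : ∀ u v : E, Dy (u + v) = Dy u + Dy v)
    (hDymul : ∀ u v : E, Dy (u * v) = Dy u * v + u * Dy v)
    (hcomm : ∀ u : E, Dx (Dy u) = Dy (Dx u))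
    (ι : Polynomial (Polynomial K) →+* E)
    (hinj : Function.Injective ι)
    (hDxι : ∀ q : Polynomial (Polynomial K), Dx (ι q) = ι (Polynomial.derivative q))
    (hDyι : ∀ q : Polynomial (Polynomial K), Dy (ι q) = ι (DY q))
    (L : ℕ) (a b c0 bs : Polynomial (Polynomial K))
    (c : Fin L → Polynomial (Polynomial K)) (e : Fin L → K)
    (ha : a ≠ 0) (hb : b ≠ 0) (hc0 : c0 ≠ 0) (hc : ∀ ℓ, c ℓ ≠ 0)
    (hbs : Squarefree bs)
    (hbsb : ∀ q : Polynomial (Polynomial K), Prime q → (q ∣ bs ↔ q ∣ b))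
    (h : E) (hh : h ≠ 0)
    (hDxh : Dx h * ι (c0 * b ^ 2 * (∏ ℓ, c ℓ))
      = h * ι (Polynomial.derivative c0 * b ^ 2 * (∏ ℓ, c ℓ)
          + (Polynomial.derivative a * b - a * Polynomial.derivative b) * c0 * (∏ ℓ, c ℓ)
          + c0 * b ^ 2 * ∑ ℓ, e ℓ • (Polynomial.derivative (c ℓ) * ∏ j ∈ Finset.univ.erase ℓ, c j)))
    (hDyh : Dy h * ι (c0 * b ^ 2 * (∏ ℓ, c ℓ))
      = h * ι (DY c0 * b ^ 2 * (∏ ℓ, c ℓ)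
          + (DY a * b - a * DY b) * c0 * (∏ ℓ, c ℓ)
          + c0 * b ^ 2 * ∑ ℓ, e ℓ • (DY (c ℓ) * ∏ j ∈ Finset.univ.erase ℓ, c j)))
    (r : ℕ) (hr : 1 ≤ r)
    (hya : degY a = 0) (hyb : degY b = 0)
    (hyc : ∀ ℓ, (∀ n : ℤ, e ℓ ≠ (n : K)) → degY (c ℓ) = 0)
    (η : ℤ) (hη : (η : K) = ∑ ℓ, e ℓ * (degY (c ℓ) : K)) :
    ∀ q : Polynomial (Polynomial K), q ≠ 0 →
      (∀ n m : ℕ, (m : ℤ) = ((degY bs + max (degY a) (degY b) + ∑ ℓ, degY (c ℓ)) : ℤ) * ((r : ℤ) - 1) - η →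
        (q.coeff n).coeff m = 0) →
      Dy (ι q * h / ι (c0 * (b * bs * ∏ ℓ, c ℓ) ^ (r - 1))) ≠ 0 := by
  obtain ⟨s, rfl⟩ : ∃ s, r = s + 1 := ⟨r - 1, (Nat.succ_pred_eq_of_pos hr).symm⟩
  intro q hq hqco hDyQ
  simp only [Nat.add_sub_cancel] at hqco hDyQ
  -- basic nonvanishing
  have hbs0 : bs ≠ 0 := by
    rintro rfl
    exact not_squarefree_zero hbs
  have hPc0 : (∏ ℓ, c ℓ) ≠ 0 := Finset.prod_ne_zero_iff.mpr fun ℓ _ => hc ℓ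
  have hP0 : c0 * (b * bs * ∏ ℓ, c ℓ) ^ s ≠ 0 :=
    mul_ne_zero hc0 (pow_ne_zero _ (mul_ne_zero (mul_ne_zero hb hbs0) hPc0))
  have hιP : ι (c0 * (b * bs * ∏ ℓ, c ℓ) ^ s) ≠ 0 := by
    intro h0
    exact hP0 (hinj (by rw [h0, map_zero]))
  -- the quotient identity transported to the polynomial ring
  have hQP : (ι q * h / ι (c0 * (b * bs * ∏ ℓ, c ℓ) ^ s)) * ι (c0 * (b * bs * ∏ ℓ, c ℓ) ^ s)
      = ι q * h := div_mul_cancel₀ _ hιP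
  have h1 := congrArg Dy hQP
  rw [hDymul, hDymul, hDyQ, zero_mul, zero_add, hDyι, hDyι] at h1
  have h2 : ι q * h * ι (DY (c0 * (b * bs * ∏ ℓ, c ℓ) ^ s))
      = (ι (DY q) * h + ι q * Dy h) * ι (c0 * (b * bs * ∏ ℓ, c ℓ) ^ s) := by
    calc ι q * h * ι (DY (c0 * (b * bs * ∏ ℓ, c ℓ) ^ s))
        = ((ι q * h / ι (c0 * (b * bs * ∏ ℓ, c ℓ) ^ s)) * ι (c0 * (b * bs * ∏ ℓ, c ℓ) ^ s))
            * ι (DY (c0 * (b * bs * ∏ ℓ, c ℓ) ^ s)) := by rw [hQP]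
      _ = ((ι q * h / ι (c0 * (b * bs * ∏ ℓ, c ℓ) ^ s))
            * ι (DY (c0 * (b * bs * ∏ ℓ, c ℓ) ^ s))) * ι (c0 * (b * bs * ∏ ℓ, c ℓ) ^ s) := by
          ring
      _ = (ι (DY q) * h + ι q * Dy h) * ι (c0 * (b * bs * ∏ ℓ, c ℓ) ^ s) := by rw [h1]
  have h3 : h * ι (q * DY (c0 * (b * bs * ∏ ℓ, c ℓ) ^ s) * (c0 * b ^ 2 * ∏ ℓ, c ℓ))
      = h * ι (DY q * (c0 * (b * bs * ∏ ℓ, c ℓ) ^ s) * (c0 * b ^ 2 * ∏ ℓ, c ℓ)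
          + q * (c0 * (b * bs * ∏ ℓ, c ℓ) ^ s) *
            (DY c0 * b ^ 2 * (∏ ℓ, c ℓ)
              + (DY a * b - a * DY b) * c0 * (∏ ℓ, c ℓ)
              + c0 * b ^ 2 * ∑ ℓ, e ℓ • (DY (c ℓ) * ∏ j ∈ Finset.univ.erase ℓ, c j))) := by
    simp only [map_mul, map_add, map_pow, map_sub] at h2 hDyh ⊢
    linear_combination (ι c0 * ι b ^ 2 * ι (∏ ℓ, c ℓ)) * h2
      + (ι q * (ι c0 * (ι b * ι bs * ι (∏ ℓ, c ℓ)) ^ s)) * hDyh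
  have E1R : q * DY (c0 * (b * bs * ∏ ℓ, c ℓ) ^ s) * (c0 * b ^ 2 * ∏ ℓ, c ℓ)
      = DY q * (c0 * (b * bs * ∏ ℓ, c ℓ) ^ s) * (c0 * b ^ 2 * ∏ ℓ, c ℓ)
        + q * (c0 * (b * bs * ∏ ℓ, c ℓ) ^ s) *
          (DY c0 * b ^ 2 * (∏ ℓ, c ℓ)
            + (DY a * b - a * DY b) * c0 * (∏ ℓ, c ℓ)
            + c0 * b ^ 2 * ∑ ℓ, e ℓ • (DY (c ℓ) * ∏ j ∈ Finset.univ.erase ℓ, c j)) :=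
    hinj (mul_left_cancel₀ hh h3)
  have hDYa : DY a = 0 := DY_eq_zero_of_degY_eq_zero hya
  have hDYb : DY b = 0 := DY_eq_zero_of_degY_eq_zero hyb
  rw [hDYa, hDYb] at E1R
  simp only [zero_mul, mul_zero, sub_self, zero_add, add_zero, smul_eq_CC] at E1R
  -- y-degree of bs is zero
  have hbsdvd : bs ∣ b := sqf_dvd hb hbs (fun p hp hpd => (hbsb p hp).mp hpd)
  obtain ⟨t, hbt⟩ := hbsdvd
  have ht0 : t ≠ 0 := by
    rintro rfl
    rw [mul_zero] at hbt
    exact hb hbt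
  have hybs : degY bs = 0 := by
    have h1' : (swapPoly b).natDegree = (swapPoly bs).natDegree + (swapPoly t).natDegree := by
      rw [hbt, map_mul, natDegree_mul (swapPoly_ne_zero hbs0) (swapPoly_ne_zero ht0)]
    have h2' : degY b = 0 := hyb
    rw [degY_eq_natDegree_swapPoly] at h2' ⊢
    omega
  -- transport via swapPoly
  have E1S := congrArg swapPoly E1R
  simp only [map_mul, map_add, map_pow, map_sum, map_prod, swapPoly_DY, swapPoly_C_C] at E1S
  have hcore := core L (swapPoly q) (swapPoly c0) (swapPoly b) (swapPoly bs)
    (fun ℓ => swapPoly (c ℓ)) (fun ℓ => C (e ℓ))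
    (swapPoly_ne_zero hq) (swapPoly_ne_zero hc0) (swapPoly_ne_zero hb) (swapPoly_ne_zero hbs0)
    (fun ℓ => swapPoly_ne_zero (hc ℓ))
    (derivative_swapPoly_eq_zero hyb) (derivative_swapPoly_eq_zero hybs) s
    (by linear_combination E1S)
  -- pass to K by evaluating coefficients
  have hK := congrArg (Polynomial.eval (0 : K)) hcore
  simp only [eval_natCast, eval_finset_sum, eval_mul, eval_sub, eval_C] at hK
  have hdegc : ∀ ℓ, (swapPoly (c ℓ)).natDegree = degY (c ℓ) :=
    fun ℓ => (degY_eq_natDegree_swapPoly _).symm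
  simp only [hdegc] at hK
  have expand : ∑ ℓ, ((s : K) - e ℓ) * (degY (c ℓ) : K)
      = (∑ ℓ, (degY (c ℓ) : K)) * (s : K) - ∑ ℓ, e ℓ * (degY (c ℓ) : K) := by
    rw [Finset.sum_mul, ← Finset.sum_sub_distrib]
    apply Finset.sum_congr rfl
    intro ℓ _
    ring
  have hint : ((swapPoly q).natDegree : ℤ) = (∑ ℓ, (degY (c ℓ) : ℤ)) * (s : ℤ) - η := by
    have hcast : (((swapPoly q).natDegree : ℤ) : K)
        = (((∑ ℓ, (degY (c ℓ) : ℤ)) * (s : ℤ) - η : ℤ) : K) := by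
      push_cast
      rw [hK, expand, hη]
    exact Int.cast_injective hcast
  -- contradiction with the coefficient hypothesis
  have hcond : ((swapPoly q).natDegree : ℤ)
      = ((degY bs + max (degY a) (degY b) + ∑ ℓ, degY (c ℓ)) : ℤ) * (((s + 1 : ℕ) : ℤ) - 1) - η := by
    rw [hint, hya, hyb, hybs]
    simp only [max_self]
    push_cast
    ring
  have hz : (swapPoly q).coeff ((swapPoly q).natDegree) = 0 := by
    apply Polynomial.ext
    intro n
    rw [swapPoly_coeff, coeff_zero]
    exact hqco n ((swapPoly q).natDegree) hcond
  have hlc : (swapPoly q).coeff ((swapPoly q).natDegree) ≠ 0 := by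
    rw [coeff_natDegree]
    exact leadingCoeff_ne_zero.mpr (swapPoly_ne_zero hq)
  exact hlc hz
end

section
/- Let u, v ∈ K[x,y] with v irreducible, deg_y v ≥ 1 and deg_y u < deg_y v, and let h = u/v ∈ K(x,y). Then for every integer r ≥ deg_y v there exist rational functions p_0, …, p_r ∈ K(x), not all zero, and a polynomial q ∈ K[x][y] with deg_y q ≤ deg_y u + (r−1)·deg_y v, such that p_0·h + p_1·D_x h + ⋯ + p_r·D_x^r h = D_y(q/v^r) in K(x,y). -/
open Polynomial Finset

namespace RCT

/-! ### The embedding `K[y][x] → K(x)[y]` -/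

variable {K : Type*} [Field K]

noncomputable def cf (K : Type*) [Field K] : K →+* RatFunc K :=
  (algebraMap (Polynomial K) (RatFunc K)).comp Polynomial.C

noncomputable def Φ (K : Type*) [Field K] :
    Polynomial (Polynomial K) →+* Polynomial (RatFunc K) :=
  Polynomial.eval₂RingHom (Polynomial.mapRingHom (cf K))
    (Polynomial.C (algebraMap (Polynomial K) (RatFunc K) Polynomial.X))

noncomputable def Tr (p : Polynomial (Polynomial K)) (m : ℕ) : Polynomial K :=
  ∑ n ∈ p.support, Polynomial.monomial n ((p.coeff n).coeff m)

lemma Tr_coeff (p : Polynomial (Polynomial K)) (m n : ℕ) :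
    (Tr p m).coeff n = (p.coeff n).coeff m := by
  rw [Tr, finset_sum_coeff]
  simp only [coeff_monomial]
  rw [Finset.sum_ite_eq' p.support n fun k => (p.coeff k).coeff m]
  by_cases h : n ∈ p.support
  · simp [h]
  · simp [h, Polynomial.notMem_support_iff.mp h]

lemma Phi_coeff (p : Polynomial (Polynomial K)) (m : ℕ) :
    (Φ K p).coeff m = algebraMap (Polynomial K) (RatFunc K) (Tr p m) := by
  rw [Φ, coe_eval₂RingHom, Polynomial.eval₂_eq_sum, Polynomial.sum, finset_sum_coeff, Tr,
    map_sum]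
  refine Finset.sum_congr rfl fun n _ => ?_
  rw [← Polynomial.C_pow, Polynomial.coeff_mul_C, coe_mapRingHom, Polynomial.coeff_map,
    ← Polynomial.C_mul_X_pow_eq_monomial, map_mul, map_pow]
  rfl

lemma alg_inj : Function.Injective (algebraMap (Polynomial K) (RatFunc K)) :=
  IsFractionRing.injective _ _

lemma Phi_inj : Function.Injective (Φ K) := by
  intro p q h
  ext n m
  have := congrArg (fun t => Polynomial.coeff t m) h
  simp only [Phi_coeff] at this
  have := alg_inj this
  have := congrArg (fun t => Polynomial.coeff t n) this
  simpa [Tr_coeff] using this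

lemma natDegree_Phi (p : Polynomial (Polynomial K)) : (Φ K p).natDegree = degY p := by
  apply le_antisymm
  · apply natDegree_le_iff_coeff_eq_zero.mpr
    intro m hm
    rw [Phi_coeff]
    convert (algebraMap (Polynomial K) (RatFunc K)).map_zero
    ext n
    rw [Tr_coeff]
    simp only [coeff_zero]
    by_cases h : n ∈ p.support
    · exact coeff_eq_zero_of_natDegree_lt
        (lt_of_le_of_lt (Finset.le_sup (f := fun k => (p.coeff k).natDegree) h) hm)
    · simp [Polynomial.notMem_support_iff.mp h]
  · apply Finset.sup_le
    intro n hn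
    set m := (p.coeff n).natDegree with hm
    apply le_natDegree_of_ne_zero
    rw [Phi_coeff]
    intro h0
    have : Tr p m = 0 := alg_inj (by simpa using h0)
    have := congrArg (fun t => Polynomial.coeff t n) this
    simp only [Tr_coeff, coeff_zero] at this
    exact (Polynomial.mem_support_iff.mp hn) (Polynomial.leadingCoeff_eq_zero.mp this)

lemma Phi_liftX (s : Polynomial K) :
    Φ K (liftX s) = Polynomial.C (algebraMap (Polynomial K) (RatFunc K) s) := by
  have : (Φ K).comp (Polynomial.mapRingHom (Polynomial.C : K →+* Polynomial K))
      = (Polynomial.C : RatFunc K →+* Polynomial (RatFunc K)).comp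
        (algebraMap (Polynomial K) (RatFunc K)) := by
    apply Polynomial.ringHom_ext
    · intro a
      simp [Φ, cf]
    · simp [Φ]
  have h2 := RingHom.congr_fun this s
  simpa [liftX] using h2

lemma Phi_C_X_pow (m : ℕ) :
    Φ K (Polynomial.C ((Polynomial.X : Polynomial K) ^ m)) = Polynomial.X ^ m := by
  rw [Φ, coe_eval₂RingHom, Polynomial.eval₂_C, coe_mapRingHom, Polynomial.map_pow,
    Polynomial.map_X]

lemma DY_monomial (n : ℕ) (a : Polynomial K) :
    DY (Polynomial.monomial n a) = Polynomial.C (Polynomial.derivative a) * Polynomial.X ^ n := by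
  rw [DY, Polynomial.sum_monomial_index]
  simp

lemma DY_add (p q : Polynomial (Polynomial K)) : DY (p + q) = DY p + DY q := by
  rw [DY, DY, DY, Polynomial.sum_add_index] <;> simp [add_mul]

lemma Phi_DY (p : Polynomial (Polynomial K)) :
    Φ K (DY p) = Polynomial.derivative (Φ K p) := by
  induction p using Polynomial.induction_on' with
  | add p q hp hq => rw [DY_add, map_add, map_add, hp, hq, derivative_add]
  | monomial n a =>
    rw [DY_monomial, ← Polynomial.C_mul_X_pow_eq_monomial, map_mul, map_mul, map_pow]
    simp only [Φ, coe_eval₂RingHom, Polynomial.eval₂_C, Polynomial.eval₂_X, coe_mapRingHom]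
    rw [← Polynomial.C_pow, Polynomial.derivative_mul, Polynomial.derivative_C,
      Polynomial.derivative_map, mul_zero, add_zero]

lemma DY_mul (p q : Polynomial (Polynomial K)) :
    DY (p * q) = DY p * q + p * DY q := by
  apply Phi_inj
  simp only [Phi_DY, map_add, map_mul, Polynomial.derivative_mul]

lemma DY_pow (v : Polynomial (Polynomial K)) (n : ℕ) :
    DY (v ^ n) = (n : Polynomial (Polynomial K)) * v ^ (n - 1) * DY v := by
  apply Phi_inj
  simp only [Phi_DY, map_mul, map_pow, map_natCast, Polynomial.derivative_pow]

lemma degY_derivative_le (p : Polynomial (Polynomial K)) :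
    degY (Polynomial.derivative p) ≤ degY p := by
  apply Finset.sup_le
  intro n hn
  have h1 : (Polynomial.derivative p).coeff n = p.coeff (n + 1) * (n + 1 : Polynomial K) := by
    simpa using Polynomial.coeff_derivative p n
  have h2 : p.coeff (n + 1) ≠ 0 := by
    intro h; apply Polynomial.mem_support_iff.mp hn; rw [h1, h, zero_mul]
  calc ((Polynomial.derivative p).coeff n).natDegree
      ≤ (p.coeff (n+1)).natDegree + ((n + 1 : Polynomial K)).natDegree := by
        rw [h1]; exact natDegree_mul_le
    _ ≤ degY p := by
        have : ((n + 1 : Polynomial K)).natDegree = 0 := by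
          have : ((n + 1 : ℕ) : Polynomial K) = (n + 1 : Polynomial K) := by push_cast; ring
          rw [← this, Polynomial.natDegree_natCast]
        rw [this, add_zero]
        exact Finset.le_sup (f := fun k => (p.coeff k).natDegree)
          (Polynomial.mem_support_iff.mpr h2)

lemma degY_mul_le (p q : Polynomial (Polynomial K)) : degY (p * q) ≤ degY p + degY q := by
  rw [← natDegree_Phi, ← natDegree_Phi, ← natDegree_Phi, map_mul]
  exact Polynomial.natDegree_mul_le

/-! ### Numerators of the iterated `x`-derivatives of `u/v` -/

noncomputable def anum (u v : Polynomial (Polynomial K)) : ℕ → Polynomial (Polynomial K)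
  | 0 => u
  | (i+1) => Polynomial.derivative (anum u v i) * v
      - (((i + 1 : ℕ)) : Polynomial (Polynomial K)) * (anum u v i * Polynomial.derivative v)

lemma degY_natCast (n : ℕ) : degY ((n : Polynomial (Polynomial K))) = 0 := by
  rw [← natDegree_Phi, map_natCast, Polynomial.natDegree_natCast]

lemma degY_sub_le (p q : Polynomial (Polynomial K)) :
    degY (p - q) ≤ max (degY p) (degY q) := by
  rw [← natDegree_Phi, ← natDegree_Phi, ← natDegree_Phi, map_sub]
  exact Polynomial.natDegree_sub_le _ _

lemma degY_anum_le (u v : Polynomial (Polynomial K)) (i : ℕ) :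
    degY (anum u v i) ≤ degY u + i * degY v := by
  induction i with
  | zero => simp [anum]
  | succ i ih =>
    rw [anum]
    refine le_trans (degY_sub_le _ _) (max_le ?_ ?_)
    · refine le_trans (degY_mul_le _ _) ?_
      have := le_trans (degY_derivative_le (anum u v i)) ih
      have h2 : (i + 1) * degY v = i * degY v + degY v := by ring
      omega
    · refine le_trans (degY_mul_le _ _) ?_
      rw [degY_natCast, zero_add]
      refine le_trans (degY_mul_le _ _) ?_
      have := degY_derivative_le v
      have h2 : (i + 1) * degY v = i * degY v + degY v := by ring
      omega

/-! ### Derivation calculus in the field `E` -/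

section Efield
variable {E : Type*} [Field E] (D : E → E) (hmul : ∀ a b : E, D (a * b) = D a * b + a * D b)

include hmul in
lemma D_one : D 1 = 0 := by
  have h := hmul 1 1
  rw [mul_one, one_mul] at h
  linear_combination -h

include hmul in
lemma D_div (a b : E) (hb : b ≠ 0) : D (a / b) = (D a * b - a * D b) / b ^ 2 := by
  have h1 : a / b * b = a := div_mul_cancel₀ a hb
  have h2 := hmul (a / b) b
  rw [h1] at h2
  rw [eq_div_iff (pow_ne_zero 2 hb)]
  have h3 : D (a / b) * b ^ 2 = (D a - a / b * D b) * b := by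
    rw [h2]; ring
  rw [h3, sub_mul, mul_comm (a / b) (D b), mul_assoc, h1]
  ring

end Efield


section LinAlg
variable {F : Type*} [Field F] [CharZero F]

/-- The map `Q ↦ Q' V - r Q V'` as a linear map. -/
noncomputable def Lmap (V : Polynomial F) (r : ℕ) : Polynomial F →ₗ[F] Polynomial F where
  toFun Q := Polynomial.derivative Q * V - (r : F) • (Q * Polynomial.derivative V)
  map_add' a b := by
    simp only [Polynomial.derivative_add, add_mul, smul_add]
    ring
  map_smul' c a := by
    simp only [Polynomial.derivative_smul, smul_mul_assoc, smul_sub, RingHom.id_apply]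
    rw [smul_comm (r : F) c]

lemma Lmap_ne_zero (V : Polynomial F) (r N : ℕ) (hd : 1 ≤ V.natDegree)
    (hN : N < r * V.natDegree) (Q : Polynomial F) (hQ : Q ≠ 0) (hQN : Q.natDegree ≤ N) :
    Lmap V r Q ≠ 0 := by
  have hV : V ≠ 0 := fun h => by rw [h, Polynomial.natDegree_zero] at hd; omega
  set d := V.natDegree with hdd
  have hlcV : V.coeff d ≠ 0 := Polynomial.leadingCoeff_ne_zero.mpr hV
  have hr1 : 1 ≤ r := by
    rcases Nat.eq_zero_or_pos r with h | h
    · exfalso; rw [h, zero_mul] at hN; omega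
    · exact h
  set k := Q.natDegree with hkk
  have hlcQ : Q.coeff k ≠ 0 := Polynomial.leadingCoeff_ne_zero.mpr hQ
  intro hL0
  have hcoeff : (Lmap V r Q).coeff (k + d - 1) = 0 := by rw [hL0]; simp
  have h3 : (Polynomial.derivative V).coeff (d - 1) = V.coeff d * (d : F) := by
    have := Polynomial.coeff_derivative V (d - 1)
    rwa [Nat.sub_add_cancel hd, Nat.cast_sub hd, Nat.cast_one, sub_add_cancel] at this
  rcases Nat.eq_zero_or_pos k with hk0 | hk1
  · -- constant case
    have hQC : Q = Polynomial.C (Q.coeff 0) := Polynomial.eq_C_of_natDegree_eq_zero (by omega)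
    have hder : Polynomial.derivative Q = 0 := by rw [hQC]; exact Polynomial.derivative_C
    have h2 : (Q * Polynomial.derivative V).coeff (0 + (d - 1))
        = Q.coeff 0 * (Polynomial.derivative V).coeff (d - 1) :=
      Polynomial.coeff_mul_add_eq_of_natDegree_le (by omega) (Polynomial.natDegree_derivative_le V)
    rw [Lmap] at hcoeff
    simp only [LinearMap.coe_mk, AddHom.coe_mk, Polynomial.coeff_sub, Polynomial.coeff_smul,
      hder, zero_mul, Polynomial.coeff_zero, smul_eq_mul] at hcoeff
    rw [show k + d - 1 = 0 + (d - 1) by omega, h2, h3] at hcoeff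
    have hQ0 : Q.coeff 0 ≠ 0 := by rwa [hk0] at hlcQ
    have hr0 : (r : F) ≠ 0 := Nat.cast_ne_zero.mpr (by omega)
    have hd0 : (d : F) ≠ 0 := Nat.cast_ne_zero.mpr (by omega)
    have key : (r : F) * (Q.coeff 0 * (V.coeff d * (d : F))) = 0 := by linear_combination -hcoeff
    rcases mul_eq_zero.mp key with h | h
    · exact hr0 h
    rcases mul_eq_zero.mp h with h | h
    · exact hQ0 h
    rcases mul_eq_zero.mp h with h | h
    · exact hlcV h
    · exact hd0 h
  · -- nonconstant case
    have h1 : (Polynomial.derivative Q * V).coeff ((k - 1) + d)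
        = (Polynomial.derivative Q).coeff (k - 1) * V.coeff d :=
      Polynomial.coeff_mul_add_eq_of_natDegree_le (Polynomial.natDegree_derivative_le Q) le_rfl
    have h1' : (Polynomial.derivative Q).coeff (k - 1) = Q.coeff k * (k : F) := by
      have := Polynomial.coeff_derivative Q (k - 1)
      rwa [Nat.sub_add_cancel hk1, Nat.cast_sub hk1, Nat.cast_one, sub_add_cancel] at this
    have h2 : (Q * Polynomial.derivative V).coeff (k + (d - 1))
        = Q.coeff k * (Polynomial.derivative V).coeff (d - 1) :=
      Polynomial.coeff_mul_add_eq_of_natDegree_le le_rfl (Polynomial.natDegree_derivative_le V)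
    rw [Lmap] at hcoeff
    simp only [LinearMap.coe_mk, AddHom.coe_mk, Polynomial.coeff_sub, Polynomial.coeff_smul,
      smul_eq_mul] at hcoeff
    rw [show k + d - 1 = (k - 1) + d by omega, h1, h1',
      show (k - 1) + d = k + (d - 1) by omega, h2, h3] at hcoeff
    have hne : (k : F) - (r : F) * (d : F) ≠ 0 := by
      intro h
      have hcast : ((k : ℕ) : F) = ((r * d : ℕ) : F) := by push_cast; linear_combination h
      have := Nat.cast_injective (R := F) hcast
      omega
    have key : Q.coeff k * V.coeff d * ((k : F) - (r : F) * (d : F)) = 0 := by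
      linear_combination hcoeff
    rcases mul_eq_zero.mp key with h | h
    · exact mul_ne_zero hlcQ hlcV h
    · exact hne h

end LinAlg

section LinAlg2
variable {F : Type*} [Field F] [CharZero F]

lemma exists_solution (V : Polynomial F) (r N : ℕ) (hd : 1 ≤ V.natDegree)
    (hN : N < r * V.natDegree) (hdr : V.natDegree ≤ r)
    (B : Fin (r + 1) → Polynomial F) (hB : ∀ i, (B i).natDegree ≤ N + V.natDegree) :
    ∃ (p : Fin (r + 1) → F) (Q : Polynomial F), (∃ i, p i ≠ 0) ∧ Q.natDegree ≤ N ∧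
      ∑ i, p i • B i = Lmap V r Q := by
  set d := V.natDegree with hdd
  -- the combined family of vectors
  set G : Fin ((r + 1) + (N + 1)) → Polynomial F :=
    Fin.addCases B (fun m => Lmap V r ((Polynomial.X : Polynomial F) ^ (m : ℕ))) with hG
  have hGdeg : ∀ j, (G j).natDegree ≤ N + d := by
    intro j
    refine Fin.addCases (fun i => ?_) (fun m => ?_) j
    · rw [hG]; simp only [Fin.addCases_left]; exact hB i
    · rw [hG]; simp only [Fin.addCases_right]
      refine le_trans (Polynomial.natDegree_sub_le _ _) (max_le ?_ ?_)
      · refine le_trans (Polynomial.natDegree_mul_le) ?_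
        have h1 : (Polynomial.derivative ((Polynomial.X : Polynomial F) ^ (m : ℕ))).natDegree
            ≤ (m : ℕ) - 1 :=
          le_trans (Polynomial.natDegree_derivative_le _) (by rw [Polynomial.natDegree_X_pow])
        have hm : (m : ℕ) ≤ N := by omega
        omega
      · refine le_trans (Polynomial.natDegree_smul_le _ _) ?_
        refine le_trans (Polynomial.natDegree_mul_le) ?_
        have h1 : (Polynomial.derivative V).natDegree ≤ d - 1 :=
          Polynomial.natDegree_derivative_le V
        have hm : (m : ℕ) ≤ N := by omega
        rw [Polynomial.natDegree_X_pow]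
        omega
  -- the truncated linear map
  set Ψ : (Fin ((r + 1) + (N + 1)) → F) →ₗ[F] (Fin (N + d + 1) → F) :=
    (LinearMap.pi fun k : Fin (N + d + 1) => Polynomial.lcoeff F k).comp
      (Fintype.linearCombination F G) with hΨ
  have hnotinj : ¬ Function.Injective Ψ := by
    intro hinj
    have := LinearMap.finrank_le_finrank_of_injective hinj
    rw [Module.finrank_fin_fun, Module.finrank_fin_fun] at this
    omega
  rw [← LinearMap.ker_eq_bot] at hnotinj
  obtain ⟨z, hzker, hz⟩ := Submodule.exists_mem_ne_zero_of_ne_bot hnotinj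
  -- the polynomial combination is zero
  have hzero : ∑ j, z j • G j = 0 := by
    have hdeg : (∑ j, z j • G j).natDegree ≤ N + d :=
      Polynomial.natDegree_sum_le_of_forall_le _ _ fun j _ =>
        le_trans (Polynomial.natDegree_smul_le _ _) (hGdeg j)
    ext k
    rw [Polynomial.coeff_zero]
    by_cases hk : k ≤ N + d
    · have := congrFun (LinearMap.mem_ker.mp hzker) ⟨k, by omega⟩
      simpa [hΨ, Fintype.linearCombination_apply, Polynomial.lcoeff_apply] using this
    · exact Polynomial.coeff_eq_zero_of_natDegree_lt (by omega)
  -- split the sum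
  set p : Fin (r + 1) → F := fun i => z (Fin.castAdd (N + 1) i) with hp
  set w : Fin (N + 1) → F := fun m => z (Fin.natAdd (r + 1) m) with hw
  set Q0 : Polynomial F := ∑ m : Fin (N + 1), w m • (Polynomial.X : Polynomial F) ^ (m : ℕ)
    with hQ0
  have hsplit : ∑ i, p i • B i + Lmap V r Q0 = 0 := by
    have h1 : ∑ j, z j • G j
        = ∑ i, p i • B i + ∑ m : Fin (N + 1), w m • Lmap V r ((Polynomial.X : Polynomial F) ^ (m : ℕ)) := by
      rw [Fin.sum_univ_add (f := fun j => z j • G j)]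
      congr 1
      · refine Finset.sum_congr rfl fun i _ => ?_
        rw [hG]; simp only [Fin.addCases_left, hp]
      · refine Finset.sum_congr rfl fun m _ => ?_
        rw [hG]; simp only [Fin.addCases_right, hw]
    have h2 : Lmap V r Q0 = ∑ m : Fin (N + 1), w m • Lmap V r ((Polynomial.X : Polynomial F) ^ (m : ℕ)) := by
      rw [hQ0, map_sum]
      simp only [map_smul]
    rw [h2, ← h1]
    exact hzero
  have hQ0deg : Q0.natDegree ≤ N := by
    rw [hQ0]
    refine Polynomial.natDegree_sum_le_of_forall_le _ _ fun m _ => ?_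
    refine le_trans (Polynomial.natDegree_smul_le _ _) ?_
    rw [Polynomial.natDegree_X_pow]
    omega
  have hcoeffQ0 : ∀ m₀ : Fin (N + 1), Q0.coeff (m₀ : ℕ) = w m₀ := by
    intro m₀
    rw [hQ0, Polynomial.finset_sum_coeff]
    rw [Finset.sum_eq_single m₀]
    · simp [Polynomial.coeff_smul, Polynomial.coeff_X_pow]
    · intro m _ hm
      have hne : ((m₀ : ℕ) : ℕ) ≠ (m : ℕ) := fun h => hm (Fin.ext h.symm)
      simp [Polynomial.coeff_smul, Polynomial.coeff_X_pow, hne]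
    · intro h; exact absurd (Finset.mem_univ m₀) h
  have hpne : ∃ i, p i ≠ 0 := by
    by_contra hall
    push_neg at hall
    have hQ00 : Lmap V r Q0 = 0 := by
      have : ∑ i, p i • B i = 0 := by
        refine Finset.sum_eq_zero fun i _ => ?_
        rw [hall i, zero_smul]
      rw [this, zero_add] at hsplit
      exact hsplit
    have hQ0z : Q0 = 0 := by
      by_contra hne
      exact Lmap_ne_zero V r N hd hN Q0 hne hQ0deg hQ00
    apply hz
    funext j
    refine Fin.addCases (fun i => hall i) (fun m => ?_) j
    have := hcoeffQ0 m
    rw [hQ0z, Polynomial.coeff_zero] at this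
    exact this.symm
  refine ⟨p, -Q0, hpne, ?_, ?_⟩
  · rw [Polynomial.natDegree_neg]; exact hQ0deg
  · rw [map_neg]
    exact eq_neg_of_add_eq_zero_left hsplit

end LinAlg2

/-! ### Iterated `x`-derivatives in `E` -/

lemma Dx_iter {K : Type*} [Field K] {E : Type*} [Field E]
    (Dx : E → E) (hDxmul : ∀ a b : E, Dx (a * b) = Dx a * b + a * Dx b)
    (ι : Polynomial (Polynomial K) →+* E) (hinj : Function.Injective ι)
    (hDxι : ∀ q : Polynomial (Polynomial K), Dx (ι q) = ι (Polynomial.derivative q))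
    (u v : Polynomial (Polynomial K)) (hv0 : v ≠ 0) :
    ∀ i, Dx^[i] (ι u / ι v) = ι (anum u v i) / ι (v ^ (i + 1)) := by
  have hvpow : ∀ k : ℕ, ι (v ^ k) ≠ 0 := fun k =>
    (map_ne_zero_iff ι hinj).mpr (pow_ne_zero k hv0)
  intro i
  induction i with
  | zero => simp [anum]
  | succ i ih =>
    rw [Function.iterate_succ_apply', ih,
      D_div Dx hDxmul _ _ (hvpow (i + 1)), hDxι, hDxι,
      ← map_mul, ← map_mul, ← map_sub, ← map_pow,
      div_eq_div_iff ((map_ne_zero_iff ι hinj).mpr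
        (pow_ne_zero 2 (pow_ne_zero (i+1) hv0))) (hvpow (i + 2)),
      ← map_mul, ← map_mul]
    apply congrArg ι
    rw [Polynomial.derivative_pow, Polynomial.C_eq_natCast, Nat.add_sub_cancel]
    show _ = anum u v (i + 1) * _
    rw [anum]
    push_cast
    ring

end RCT



theorem rational_creative_telescoping
    {K : Type*} {E : Type*} [Field K] [CharZero K] [Field E]
    (Dx Dy : E → E)
    (hDxadd : ∀ u v : E, Dx (u + v) = Dx u + Dx v)
    (hDxmul : ∀ u v : E, Dx (u * v) = Dx u * v + u * Dx v)
    (hDyadd : ∀ u v : E, Dy (u + v) = Dy u + Dy v)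
    (hDymul : ∀ u v : E, Dy (u * v) = Dy u * v + u * Dy v)
    (hcomm : ∀ u : E, Dx (Dy u) = Dy (Dx u))
    (ι : Polynomial (Polynomial K) →+* E)
    (hinj : Function.Injective ι)
    (hDxι : ∀ q : Polynomial (Polynomial K), Dx (ι q) = ι (Polynomial.derivative q))
    (hDyι : ∀ q : Polynomial (Polynomial K), Dy (ι q) = ι (DY q))
    (u v : Polynomial (Polynomial K)) (hv : Irreducible v)
    (hvy : 1 ≤ degY v) (huv : degY u < degY v)
    (r : ℕ) (hr : degY v ≤ r) :
    ∃ (s t : ℕ → Polynomial K) (q : Polynomial (Polynomial K)),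
      (∀ i, t i ≠ 0) ∧ (∃ i ≤ r, s i ≠ 0) ∧
      degY q ≤ degY u + (r - 1) * degY v ∧
      ∑ i ∈ Finset.range (r + 1),
          (ι (liftX (s i)) / ι (liftX (t i))) * Dx^[i] (ι u / ι v)
        = Dy (ι q / ι (v ^ r)) := by
  classical
  haveI : CharZero (RatFunc K) := charZero_of_injective_algebraMap
    (IsFractionRing.injective (Polynomial K) (RatFunc K))
  have hv0 : v ≠ 0 := hv.ne_zero
  have hr1 : 1 ≤ r := le_trans hvy hr
  set d := degY v with hd
  set N := degY u + (r - 1) * d with hN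
  have hrd : (r - 1) * d + d = r * d := by
    have h : r - 1 + 1 = r := by omega
    calc (r - 1) * d + d = (r - 1 + 1) * d := by ring
    _ = r * d := by rw [h]
  have hNrd : N < r * d := by omega
  set V := RCT.Φ K v with hV
  have hdV : V.natDegree = d := RCT.natDegree_Phi v
  set Bf : Fin (r + 1) → Polynomial (RatFunc K) :=
    fun i => RCT.Φ K (RCT.anum u v (i : ℕ) * v ^ (r - (i : ℕ))) with hBf
  have hBdeg : ∀ i : Fin (r + 1), (Bf i).natDegree ≤ N + V.natDegree := by
    intro i
    rw [hdV]
    have h1 : (Bf i).natDegree = degY (RCT.anum u v (i : ℕ) * v ^ (r - (i : ℕ))) := by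
      rw [hBf]; exact RCT.natDegree_Phi _
    rw [h1]
    refine le_trans (RCT.degY_mul_le _ _) ?_
    have h2 := RCT.degY_anum_le u v (i : ℕ)
    rw [← hd] at h2
    have h3 : degY (v ^ (r - (i : ℕ))) ≤ (r - (i : ℕ)) * d := by
      rw [← RCT.natDegree_Phi, map_pow]
      refine le_trans Polynomial.natDegree_pow_le ?_
      rw [← hV, hdV]
    have hi : (i : ℕ) ≤ r := by omega
    have h4 : (i : ℕ) * d + (r - (i : ℕ)) * d = r * d := by rw [← add_mul]; congr 1; omega
    omega
  obtain ⟨p, Q, ⟨i0, hi0⟩, hQN, hsol⟩ :=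
    RCT.exists_solution V r N (by rw [hdV]; exact hvy) (by rw [hdV]; exact hNrd)
      (by rw [hdV]; exact hr) Bf hBdeg
  -- clear denominators
  obtain ⟨b, hb⟩ := IsLocalization.exist_integer_multiples_of_finite
    (nonZeroDivisors (Polynomial K))
    (Sum.elim p (fun m : Fin (N + 1) => Q.coeff (m : ℕ)))
  have hb' : ∀ j, ∃ y : Polynomial K,
      algebraMap (Polynomial K) (RatFunc K) y
        = (b : Polynomial K) • Sum.elim p (fun m : Fin (N + 1) => Q.coeff (m : ℕ)) j :=
    fun j => RingHom.mem_rangeS.mp (hb j)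
  choose g hg using hb'
  set c : Polynomial K := (b : Polynomial K) with hc
  have hcne : c ≠ 0 := mem_nonZeroDivisors_iff_ne_zero.mp b.2
  set s : ℕ → Polynomial K := fun i => if h : i < r + 1 then g (Sum.inl ⟨i, h⟩) else 0 with hs
  set q : Polynomial (Polynomial K) :=
    ∑ m : Fin (N + 1), liftX (g (Sum.inr m))
        * Polynomial.C ((Polynomial.X : Polynomial K) ^ (m : ℕ)) with hq
  have hQsum : ∑ m : Fin (N + 1), Polynomial.C (Q.coeff (m : ℕ))
      * (Polynomial.X : Polynomial (RatFunc K)) ^ (m : ℕ) = Q := by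
    conv_rhs => rw [Q.as_sum_range' (N + 1) (by omega)]
    rw [← Fin.sum_univ_eq_sum_range (fun i => Polynomial.monomial i (Q.coeff i)) (N + 1)]
    exact Finset.sum_congr rfl fun m _ => Polynomial.C_mul_X_pow_eq_monomial
  have hPhiq : RCT.Φ K q = Polynomial.C (algebraMap (Polynomial K) (RatFunc K) c) * Q := by
    rw [hq, map_sum]
    have step : ∀ m : Fin (N + 1),
        RCT.Φ K (liftX (g (Sum.inr m)) * Polynomial.C ((Polynomial.X : Polynomial K) ^ (m : ℕ)))
        = Polynomial.C (algebraMap (Polynomial K) (RatFunc K) c)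
            * (Polynomial.C (Q.coeff (m : ℕ)) * Polynomial.X ^ (m : ℕ)) := by
      intro m
      rw [map_mul, RCT.Phi_liftX, RCT.Phi_C_X_pow, hg (Sum.inr m)]
      simp only [Sum.elim_inr]
      rw [Algebra.smul_def, map_mul, mul_assoc]
    rw [Finset.sum_congr rfl fun m _ => step m, ← Finset.mul_sum, hQsum]
  have hdegq : degY q ≤ N := by
    rw [← RCT.natDegree_Phi, hPhiq]
    refine le_trans Polynomial.natDegree_mul_le ?_
    rw [Polynomial.natDegree_C, zero_add]
    exact hQN
  -- the key polynomial identity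
  have star : ∑ i ∈ Finset.range (r + 1), liftX (s i) * (RCT.anum u v i * v ^ (r - i))
      = DY q * v - (r : Polynomial (Polynomial K)) * (q * DY v) := by
    apply RCT.Phi_inj
    have step : ∀ i : Fin (r + 1),
        RCT.Φ K (liftX (s (i : ℕ)) * (RCT.anum u v (i : ℕ) * v ^ (r - (i : ℕ))))
        = Polynomial.C (algebraMap (Polynomial K) (RatFunc K) c) * (p i • Bf i) := by
      intro i
      rw [map_mul, RCT.Phi_liftX]
      have hsi : s (i : ℕ) = g (Sum.inl i) := by
        rw [hs]; simp only [i.isLt, dif_pos, Fin.eta]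
      rw [hsi, hg (Sum.inl i)]
      simp only [Sum.elim_inl]
      rw [Algebra.smul_def, map_mul, Polynomial.smul_eq_C_mul, mul_assoc]
    have hLHS : RCT.Φ K (∑ i ∈ Finset.range (r + 1),
          liftX (s i) * (RCT.anum u v i * v ^ (r - i)))
        = Polynomial.C (algebraMap (Polynomial K) (RatFunc K) c) * RCT.Lmap V r Q := by
      rw [map_sum, ← Fin.sum_univ_eq_sum_range
        (fun i => RCT.Φ K (liftX (s i) * (RCT.anum u v i * v ^ (r - i)))) (r + 1)]
      rw [Finset.sum_congr rfl fun i _ => step i, ← Finset.mul_sum, hsol]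
    have hRHS : RCT.Φ K (DY q * v - (r : Polynomial (Polynomial K)) * (q * DY v))
        = Polynomial.C (algebraMap (Polynomial K) (RatFunc K) c) * RCT.Lmap V r Q := by
      rw [map_sub, map_mul, map_mul, map_mul, map_natCast, RCT.Phi_DY, RCT.Phi_DY, hPhiq,
        ← hV]
      simp only [RCT.Lmap, LinearMap.coe_mk, AddHom.coe_mk]
      rw [Polynomial.derivative_mul, Polynomial.derivative_C, Polynomial.smul_eq_C_mul]
      have hcast : ((r : ℕ) : Polynomial (RatFunc K)) = Polynomial.C ((r : ℕ) : RatFunc K) :=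
        (Polynomial.C_eq_natCast r).symm
      rw [hcast]
      ring
    rw [hLHS, hRHS]
  -- conclusion
  have hvpow : ∀ k : ℕ, ι (v ^ k) ≠ 0 := fun k =>
    (map_ne_zero_iff ι hinj).mpr (pow_ne_zero k hv0)
  have hsi0 : s (i0 : ℕ) ≠ 0 := by
    have hsi : s (i0 : ℕ) = g (Sum.inl i0) := by
      rw [hs]; simp only [i0.isLt, dif_pos, Fin.eta]
    rw [hsi]
    intro h0
    have := hg (Sum.inl i0)
    rw [h0, map_zero] at this
    simp only [Sum.elim_inl] at this
    rw [Algebra.smul_def] at this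
    have hca : algebraMap (Polynomial K) (RatFunc K) c ≠ 0 := fun h =>
      hcne (RCT.alg_inj (by simpa using h))
    exact hi0 ((mul_eq_zero.mp this.symm).resolve_left hca)
  refine ⟨s, fun _ => 1, q, fun i => one_ne_zero, ⟨(i0 : ℕ), by omega, hsi0⟩, hdegq, ?_⟩
  have hlift1 : ι (liftX (1 : Polynomial K)) = 1 := by
    rw [liftX, Polynomial.map_one, map_one]
  calc ∑ i ∈ Finset.range (r + 1),
          (ι (liftX (s i)) / ι (liftX (1 : Polynomial K))) * Dx^[i] (ι u / ι v)
      = ∑ i ∈ Finset.range (r + 1),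
          ι (liftX (s i)) * (ι (RCT.anum u v i) / ι (v ^ (i + 1))) := by
        refine Finset.sum_congr rfl fun i _ => ?_
        rw [RCT.Dx_iter Dx hDxmul ι hinj hDxι u v hv0 i, hlift1, div_one]
    _ = ∑ i ∈ Finset.range (r + 1),
          ι (liftX (s i) * (RCT.anum u v i * v ^ (r - i))) / ι (v ^ (r + 1)) := by
        refine Finset.sum_congr rfl fun i hi => ?_
        have hi' : i ≤ r := by
          have := Finset.mem_range.mp hi; omega
        have hexp : v ^ (i + 1) * v ^ (r - i) = v ^ (r + 1) := by
          rw [← pow_add]; congr 1; omega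
        rw [mul_div_assoc', div_eq_div_iff (hvpow (i + 1)) (hvpow (r + 1)),
          ← map_mul, ← map_mul, ← map_mul]
        apply congrArg ι
        linear_combination (-(liftX (s i) * RCT.anum u v i)) * hexp
    _ = ι (∑ i ∈ Finset.range (r + 1), liftX (s i) * (RCT.anum u v i * v ^ (r - i)))
          / ι (v ^ (r + 1)) := by
        rw [map_sum, Finset.sum_div]
    _ = ι (DY q * v - (r : Polynomial (Polynomial K)) * (q * DY v)) / ι (v ^ (r + 1)) := by
        rw [star]
    _ = Dy (ι q / ι (v ^ r)) := by
        rw [RCT.D_div Dy hDymul (ι q) (ι (v ^ r)) (hvpow r), hDyι, hDyι, RCT.DY_pow,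
          ← map_mul, ← map_mul, ← map_sub, ← map_pow,
          div_eq_div_iff (hvpow (r + 1)) ((map_ne_zero_iff ι hinj).mpr
            (pow_ne_zero 2 (pow_ne_zero r hv0))),
          ← map_mul, ← map_mul]
        apply congrArg ι
        have hexp3 : v ^ (r - 1) * v ^ (r + 1) = v ^ r * v ^ r := by
          rw [← pow_add, ← pow_add]; congr 1; omega
        linear_combination ((r : Polynomial (Polynomial K)) * q * DY v) * hexp3
end
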